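/- arXiv:2007.00844 — 9 statements merged into one kernel-verified Lean document; each statement's English description precedes it below -/
import Mathlib

section
/- Let M_1, ..., M_n be closed affine subspaces of a real Hilbert space H with M := ∩_{i=1}^n M_i nonempty. Then for every x_0 ∈ H, the iterates (P_{M_n} P_{M_{n-1}} ⋯ P_{M_1})^k (x_0) converge (in norm) to P_M(x_0) as k → ∞. -/
open Filter Topology

open scoped RealInnerProductSpace

/-- `P` is the nearest-point projector onto the set `S`. -/
def IsProjOn {H : Type*} [NormedAddCommGroup H] [InnerProductSpace ℝ H]
    (S : Set H) (P : H → H) : Prop :=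
  ∀ x, P x ∈ S ∧ ∀ y ∈ S, ‖x - P x‖ ≤ ‖x - y‖

private lemma aux_le_sqrt {x A : ℝ} (hx : 0 ≤ x) (hA : x ^ 2 ≤ A) :
    x ≤ Real.sqrt A := by
  calc x = Real.sqrt (x ^ 2) := (Real.sqrt_sq hx).symm
  _ ≤ Real.sqrt A := Real.sqrt_le_sqrt hA

private lemma aux_mul_le_sqrt {x y A B : ℝ} (hx : 0 ≤ x) (hy : 0 ≤ y)
    (hA : x ^ 2 ≤ A) (hB : y ^ 2 ≤ B) : x * y ≤ Real.sqrt (A * B) := by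
  refine aux_le_sqrt (mul_nonneg hx hy) ?_
  calc (x * y) ^ 2 = x ^ 2 * y ^ 2 := by ring
  _ ≤ A * B := mul_le_mul hA hB (sq_nonneg y) ((sq_nonneg x).trans hA)

private lemma aux_sq_sum_le {s : Finset ℕ} {f : ℕ → ℝ} :
    (∑ l ∈ s, f l) ^ 2 ≤ (s.card : ℝ) * ∑ l ∈ s, f l ^ 2 := by
  have h := Finset.sum_mul_sq_le_sq_mul_sq s (fun _ => (1 : ℝ)) f
  simpa using h

/-- The fundamental orthogonality property of a nearest-point projection onto a set closed
under the relevant affine combinations. -/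
private lemma isProjOn_orth {H : Type*} [NormedAddCommGroup H] [InnerProductSpace ℝ H]
    {S : Set H} {P : H → H} (hP : IsProjOn S P) (x : H)
    (hS : ∀ z ∈ S, ∀ t : ℝ, P x + t • (z - P x) ∈ S) :
    ∀ y ∈ S, ⟪x - P x, y - P x⟫ = 0 := by
  intro y hy
  rcases eq_or_ne y (P x) with h | h
  · simp [h]
  set c : ℝ := ⟪x - P x, y - P x⟫ with hc
  have hd : (0:ℝ) < ‖y - P x‖ ^ 2 :=
    pow_pos (norm_pos_iff.2 (sub_ne_zero.2 h)) 2
  set t : ℝ := c / ‖y - P x‖ ^ 2 with ht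
  have hmem := hS y hy t
  have hle := (hP x).2 _ hmem
  have hle2 : ‖x - P x‖ ^ 2 ≤ ‖x - (P x + t • (y - P x))‖ ^ 2 :=
    pow_le_pow_left₀ (norm_nonneg _) hle 2
  have hexp : ‖x - (P x + t • (y - P x))‖ ^ 2
      = ‖x - P x‖ ^ 2 - 2 * (t * c) + t ^ 2 * ‖y - P x‖ ^ 2 := by
    have h1 : x - (P x + t • (y - P x)) = (x - P x) - t • (y - P x) := by abel
    rw [h1, norm_sub_sq_real, real_inner_smul_right, norm_smul]
    simp [Real.norm_eq_abs, mul_pow, sq_abs]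
    exact Or.inl hc.symm
  rw [hexp] at hle2
  have key : 0 ≤ - 2 * (t * c) + t ^ 2 * ‖y - P x‖ ^ 2 := by linarith
  have htc : t * c = c ^ 2 / ‖y - P x‖ ^ 2 := by rw [ht]; ring
  have ht2 : t ^ 2 * ‖y - P x‖ ^ 2 = c ^ 2 / ‖y - P x‖ ^ 2 := by
    rw [ht]; field_simp
  rw [htc, ht2] at key
  have : c ^ 2 / ‖y - P x‖ ^ 2 ≤ 0 := by linarith
  have hc2 : c ^ 2 ≤ 0 := by
    by_contra hcon
    push_neg at hcon
    have := div_pos hcon hd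
    linarith
  have : c ^ 2 = 0 := le_antisymm hc2 (sq_nonneg c)
  exact pow_eq_zero_iff (by norm_num) |>.1 this

set_option maxHeartbeats 1600000 in
/-- The method of cyclic projections for affine subspaces: the iterates
`(P_{M_n} ⋯ P_{M_1})^k x₀` converge in norm to `P_M x₀` where `M = ∩ᵢ Mᵢ`. -/
theorem cyclic_projections_converge
    {H : Type*} [NormedAddCommGroup H] [InnerProductSpace ℝ H] [CompleteSpace H]
    (n : ℕ) (hn : 1 ≤ n)
    (M : ℕ → AffineSubspace ℝ H)
    (hclosed : ∀ i ∈ Finset.Icc 1 n, IsClosed (M i : Set H))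
    (hne : (⋂ i ∈ Finset.Icc 1 n, (M i : Set H)).Nonempty)
    (P : ℕ → H → H)
    (hP : ∀ i ∈ Finset.Icc 1 n, IsProjOn (M i : Set H) (P i))
    (PM : H → H)
    (hPM : IsProjOn (⋂ i ∈ Finset.Icc 1 n, (M i : Set H)) PM)
    (Q : ℕ → H → H)
    (hQ0 : Q 0 = id)
    (hQ : ∀ i, 1 ≤ i → i ≤ n → Q i = P i ∘ Q (i - 1))
    (x0 : H) :
    Tendsto (fun k => (Q n)^[k] x0) atTop (𝓝 (PM x0)) := by
  classical
  have hnpos : 0 < n := hn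
  set Mset : Set H := ⋂ i ∈ Finset.Icc 1 n, (M i : Set H) with hMset
  set q : H := PM x0 with hq
  have hqMset : q ∈ Mset := (hPM x0).1
  have hMmem : ∀ {y : H}, y ∈ Mset → ∀ i ∈ Finset.Icc 1 n, y ∈ M i := by
    intro y hy i hi
    exact Set.mem_iInter₂.1 hy i hi
  have hqM : ∀ i ∈ Finset.Icc 1 n, q ∈ M i := hMmem hqMset
  have hjIcc : ∀ l : ℕ, l % n + 1 ∈ Finset.Icc 1 n := by
    intro l
    rw [Finset.mem_Icc]
    exact ⟨Nat.le_add_left 1 _, Nat.succ_le_of_lt (Nat.mod_lt l hnpos)⟩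
  -- the full orbit of one-step projections
  set g : ℕ → H := fun l => Nat.rec x0 (fun l gl => P (l % n + 1) gl) l with hg
  have hg0 : g 0 = x0 := rfl
  have hgs : ∀ l, g (l + 1) = P (l % n + 1) (g l) := fun l => rfl
  have hgmem : ∀ l, g (l + 1) ∈ M (l % n + 1) := by
    intro l
    rw [hgs]
    exact ((hP _ (hjIcc l)) (g l)).1
  have horth : ∀ l, ∀ y ∈ M (l % n + 1), ⟪g l - g (l + 1), y - g (l + 1)⟫ = 0 := by
    intro l y hy
    have hproj := hP _ (hjIcc l)
    have haff : ∀ z ∈ (M (l % n + 1) : Set H), ∀ t : ℝ,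
        P (l % n + 1) (g l) + t • (z - P (l % n + 1) (g l)) ∈ (M (l % n + 1) : Set H) := by
      intro z hz t
      have h1 : P (l % n + 1) (g l) ∈ M (l % n + 1) := (hproj (g l)).1
      have := (M (l % n + 1)).smul_vsub_vadd_mem t hz h1 h1
      simpa [vsub_eq_sub, vadd_eq_add, add_comm] using this
    have := isProjOn_orth hproj (g l) haff y hy
    rw [hgs l]
    exact this
  have hdorth : ∀ l, ∀ y y' : H, y ∈ M (l % n + 1) → y' ∈ M (l % n + 1) →
      ⟪g l - g (l + 1), y - y'⟫ = 0 := by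
    intro l y y' hy hy'
    have h1 := horth l y hy
    have h2 := horth l y' hy'
    have h3 : y - y' = (y - g (l + 1)) - (y' - g (l + 1)) := by abel
    rw [h3, inner_sub_right, h1, h2, sub_zero]
  set e : ℕ → H := fun l => g l - q with he
  set d : ℕ → ℝ := fun l => ‖g l - g (l + 1)‖ with hdd
  set b : ℕ → ℝ := fun l => ‖e l‖ ^ 2 with hb
  have hd0 : ∀ l, 0 ≤ d l := fun l => norm_nonneg _
  have hb0 : ∀ l, 0 ≤ b l := fun l => pow_nonneg (norm_nonneg _) 2
  have hpyth : ∀ l, b l = b (l + 1) + d l ^ 2 := by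
    intro l
    have hperp : ⟪g l - g (l + 1), e (l + 1)⟫ = 0 :=
      hdorth l _ _ (hgmem l) (hqM _ (hjIcc l))
    have hsplit : e l = (g l - g (l + 1)) + e (l + 1) := by
      simp only [he]
      abel
    calc b l = ‖(g l - g (l + 1)) + e (l + 1)‖ ^ 2 := by rw [hb]; rw [← hsplit]
    _ = ‖g l - g (l + 1)‖ ^ 2 + 2 * ⟪g l - g (l + 1), e (l + 1)⟫ + ‖e (l + 1)‖ ^ 2 :=
        norm_add_sq_real _ _
    _ = b (l + 1) + d l ^ 2 := by rw [hperp]; simp only [hb, hdd]; ring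
  have hbmono : ∀ l, b (l + 1) ≤ b l := by
    intro l
    rw [hpyth l]
    nlinarith [sq_nonneg (d l)]
  have hbanti : Antitone b := antitone_nat_of_succ_le hbmono
  have hsumd : ∀ A B, A ≤ B → ∑ l ∈ Finset.Ico A B, d l ^ 2 = b A - b B := by
    intro A B hAB
    induction B, hAB using Nat.le_induction with
    | base => simp
    | succ B hAB ih =>
      rw [Finset.sum_Ico_succ_top hAB, ih, hpyth B]
      ring
  have htel : ∀ A B, A ≤ B → g A - g B = ∑ l ∈ Finset.Ico A B, (g l - g (l + 1)) := by
    intro A B hAB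
    induction B, hAB using Nat.le_induction with
    | base => simp
    | succ B hAB ih =>
      rw [Finset.sum_Ico_succ_top hAB, ← ih]
      abel
  have hdist : ∀ A B, A ≤ B → ‖e B - e A‖ ≤ ∑ l ∈ Finset.Ico A B, d l := by
    intro A B hAB
    have h1 : e B - e A = -(g A - g B) := by simp only [he]; abel
    rw [h1, norm_neg, htel A B hAB]
    exact norm_sum_le _ _
  have hEperp : ∀ l, ∀ y ∈ Mset, ⟪e l, y - q⟫ = 0 := by
    intro l
    induction l with
    | zero =>
      intro y hy
      have haff : ∀ z ∈ Mset, ∀ t : ℝ, PM x0 + t • (z - PM x0) ∈ Mset := by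
        intro z hz t
        refine Set.mem_iInter₂.2 fun i hi => ?_
        have := (M i).smul_vsub_vadd_mem t (hMmem hz i hi) (hqM i hi) (hqM i hi)
        simpa [vsub_eq_sub, vadd_eq_add, add_comm] using this
      have := isProjOn_orth hPM x0 haff y hy
      simpa [he, hg0, hq] using this
    | succ l ih =>
      intro y hy
      have h1 : e (l + 1) = e l - (g l - g (l + 1)) := by simp only [he]; abel
      rw [h1, inner_sub_left, ih y hy,
        hdorth l y q (hMmem hy _ (hjIcc l)) (hqM _ (hjIcc l)), sub_zero]
  set a : ℕ → ℝ := fun k => b (k * n) with ha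
  have haanti : Antitone a := fun k k' hkk' => hbanti (Nat.mul_le_mul_right n hkk')
  have hmod : ∀ j i : ℕ, i < n → (j * n + i) % n = i := by
    intro j i hi
    simp [Nat.add_mod, Nat.mul_mod_left, Nat.mod_eq_of_lt hi]
  -- the key inner product inequality
  have hkey : ∀ k j : ℕ, k ≤ j →
      b ((j + 1) * n) - ⟪e ((j + 1) * n), e (k * n)⟫ ≤
        (∑ l ∈ Finset.Ico (j * n) ((j + 1) * n), d l) *
          ∑ l ∈ Finset.Ico (k * n) ((j + 1) * n), d l := by
    intro k j hkj
    set D := ∑ l ∈ Finset.Ico (j * n) ((j + 1) * n), d l with hD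
    have hD0 : 0 ≤ D := Finset.sum_nonneg fun l _ => hd0 l
    have hknle : k * n ≤ (j + 1) * n := Nat.mul_le_mul_right n (by omega)
    have h1 : b ((j + 1) * n) - ⟪e ((j + 1) * n), e (k * n)⟫
        = -∑ l ∈ Finset.Ico (k * n) ((j + 1) * n), ⟪e ((j + 1) * n), g l - g (l + 1)⟫ := by
      have hbeq : b ((j + 1) * n) = ‖e ((j + 1) * n)‖ ^ 2 := rfl
      have t3 : g (k * n) - g ((j + 1) * n) = e (k * n) - e ((j + 1) * n) := by
        simp only [he]; abel
      have t2 : ⟪e ((j + 1) * n), e (k * n) - e ((j + 1) * n)⟫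
          = ∑ l ∈ Finset.Ico (k * n) ((j + 1) * n), ⟪e ((j + 1) * n), g l - g (l + 1)⟫ := by
        rw [← t3, htel _ _ hknle, inner_sum]
      have t4 : ⟪e ((j + 1) * n), e (k * n) - e ((j + 1) * n)⟫
          = ⟪e ((j + 1) * n), e (k * n)⟫ - ‖e ((j + 1) * n)‖ ^ 2 := by
        rw [inner_sub_right, real_inner_self_eq_norm_sq]
      rw [hbeq, ← t2, t4]
      ring
    rw [h1]
    have h2 : ∀ l ∈ Finset.Ico (k * n) ((j + 1) * n),
        |⟪e ((j + 1) * n), g l - g (l + 1)⟫| ≤ D * d l := by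
      intro l hl
      have hiln : l % n < n := Nat.mod_lt _ hnpos
      set p := g (j * n + l % n + 1) with hp
      have hpM : p ∈ M (l % n + 1) := by
        have := hgmem (j * n + l % n)
        rwa [hmod j (l % n) hiln] at this
      have hz : ⟪g l - g (l + 1), p - q⟫ = 0 := hdorth l p q hpM (hqM _ (hjIcc l))
      have hz' : ⟪p - q, g l - g (l + 1)⟫ = 0 := by rw [real_inner_comm]; exact hz
      have hsplit0 : ⟪e ((j + 1) * n) - (p - q), g l - g (l + 1)⟫
          = ⟪e ((j + 1) * n), g l - g (l + 1)⟫ - ⟪p - q, g l - g (l + 1)⟫ :=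
        inner_sub_left _ _ _
      have hsplit : ⟪e ((j + 1) * n), g l - g (l + 1)⟫
          = ⟪e ((j + 1) * n) - (p - q), g l - g (l + 1)⟫ := by
        rw [hsplit0, hz', sub_zero]
      have hnorm : ‖e ((j + 1) * n) - (p - q)‖ ≤ D := by
        have heq : e ((j + 1) * n) - (p - q) = e ((j + 1) * n) - e (j * n + l % n + 1) := by
          simp only [he, hp]
        rw [heq]
        have hle1 : j * n + l % n + 1 ≤ (j + 1) * n := by
          have : (j + 1) * n = j * n + n := by ring
          omega
        calc ‖e ((j + 1) * n) - e (j * n + l % n + 1)‖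
            ≤ ∑ l' ∈ Finset.Ico (j * n + l % n + 1) ((j + 1) * n), d l' := hdist _ _ hle1
        _ ≤ D := Finset.sum_le_sum_of_subset_of_nonneg
            (Finset.Ico_subset_Ico (by omega) le_rfl) (fun l' _ _ => hd0 l')
      calc |⟪e ((j + 1) * n), g l - g (l + 1)⟫|
          = |⟪e ((j + 1) * n) - (p - q), g l - g (l + 1)⟫| := by rw [hsplit]
      _ ≤ ‖e ((j + 1) * n) - (p - q)‖ * ‖g l - g (l + 1)‖ := abs_real_inner_le_norm _ _
      _ ≤ D * d l := mul_le_mul_of_nonneg_right hnorm (norm_nonneg _)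
    calc -∑ l ∈ Finset.Ico (k * n) ((j + 1) * n), ⟪e ((j + 1) * n), g l - g (l + 1)⟫
        ≤ |∑ l ∈ Finset.Ico (k * n) ((j + 1) * n), ⟪e ((j + 1) * n), g l - g (l + 1)⟫| :=
          neg_le_abs _
    _ ≤ ∑ l ∈ Finset.Ico (k * n) ((j + 1) * n), |⟪e ((j + 1) * n), g l - g (l + 1)⟫| :=
          Finset.abs_sum_le_sum_abs _ _
    _ ≤ ∑ l ∈ Finset.Ico (k * n) ((j + 1) * n), D * d l := Finset.sum_le_sum h2
    _ = D * ∑ l ∈ Finset.Ico (k * n) ((j + 1) * n), d l := by rw [Finset.mul_sum]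
  -- squared distance bound
  have hdist2 : ∀ k j : ℕ, k ≤ j →
      ‖e ((j + 1) * n) - e (k * n)‖ ^ 2 ≤ (a k - a (j + 1))
        + 2 * Real.sqrt (((n : ℝ) * (a j - a (j + 1))) *
            (((j : ℝ) + 1) * n * (a k - a (j + 1)))) := by
    intro k j hkj
    have hknle : k * n ≤ (j + 1) * n := Nat.mul_le_mul_right n (by omega)
    have hjnle : j * n ≤ (j + 1) * n := Nat.mul_le_mul_right n (by omega)
    have hexp : ‖e ((j + 1) * n) - e (k * n)‖ ^ 2
        = (a k - a (j + 1)) + 2 * (b ((j + 1) * n) - ⟪e ((j + 1) * n), e (k * n)⟫) := by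
      rw [norm_sub_sq_real]
      simp only [ha, hb]
      ring
    rw [hexp]
    set D := ∑ l ∈ Finset.Ico (j * n) ((j + 1) * n), d l with hD
    set S := ∑ l ∈ Finset.Ico (k * n) ((j + 1) * n), d l with hS
    have hD0 : 0 ≤ D := Finset.sum_nonneg fun l _ => hd0 l
    have hS0 : 0 ≤ S := Finset.sum_nonneg fun l _ => hd0 l
    have hDsq : D ^ 2 ≤ (n : ℝ) * (a j - a (j + 1)) := by
      have h1 := aux_sq_sum_le (s := Finset.Ico (j * n) ((j + 1) * n)) (f := d)
      rw [hsumd _ _ hjnle] at h1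
      have hcard : (Finset.Ico (j * n) ((j + 1) * n)).card = n := by
        rw [Nat.card_Ico]
        have : (j + 1) * n = j * n + n := by ring
        omega
      rw [hcard] at h1
      simpa [ha] using h1
    have hSsq : S ^ 2 ≤ ((j : ℝ) + 1) * n * (a k - a (j + 1)) := by
      have h1 := aux_sq_sum_le (s := Finset.Ico (k * n) ((j + 1) * n)) (f := d)
      rw [hsumd _ _ hknle] at h1
      have hsum0 : (0 : ℝ) ≤ b (k * n) - b ((j + 1) * n) := by
        have := hbanti hknle
        linarith
      have hcard : ((Finset.Ico (k * n) ((j + 1) * n)).card : ℝ) ≤ ((j : ℝ) + 1) * n := by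
        rw [Nat.card_Ico]
        have h3 : (j + 1) * n - k * n ≤ (j + 1) * n := Nat.sub_le _ _
        calc (((j + 1) * n - k * n : ℕ) : ℝ) ≤ (((j + 1) * n : ℕ) : ℝ) := by exact_mod_cast h3
        _ = ((j : ℝ) + 1) * n := by push_cast; ring
      calc S ^ 2 ≤ ((Finset.Ico (k * n) ((j + 1) * n)).card : ℝ) * (b (k * n) - b ((j + 1) * n)) :=
            h1
      _ ≤ ((j : ℝ) + 1) * n * (b (k * n) - b ((j + 1) * n)) :=
            mul_le_mul_of_nonneg_right hcard hsum0
      _ = ((j : ℝ) + 1) * n * (a k - a (j + 1)) := by simp only [ha]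
    have hDS : D * S ≤ Real.sqrt (((n : ℝ) * (a j - a (j + 1))) *
        (((j : ℝ) + 1) * n * (a k - a (j + 1)))) := aux_mul_le_sqrt hD0 hS0 hDsq hSsq
    have h1 := hkey k j hkj
    rw [← hD, ← hS] at h1
    linarith
  -- the limit of the decreasing sequence a
  have hbdd : BddBelow (Set.range a) := ⟨0, by rintro x ⟨k, rfl⟩; exact hb0 _⟩
  set c : ℝ := ⨅ k, a k with hc
  have hac : Tendsto a atTop (𝓝 c) := tendsto_atTop_ciInf haanti hbdd
  have hca : ∀ k, c ≤ a k := fun k => ciInf_le hbdd k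
  -- the selection lemma
  have hsel : ∀ ε : ℝ, 0 < ε → ∀ N : ℕ, ∃ j, N ≤ j ∧ a j - c ≤ ε ∧
      ((j : ℝ) + 1) * (a j - a (j + 1)) ≤ ε := by
    intro ε hε N
    obtain ⟨N₁, hN₁N, hN₁1, hN₁c⟩ : ∃ N₁, N ≤ N₁ ∧ 1 ≤ N₁ ∧ a N₁ - c ≤ ε / 2 := by
      have h1 : ∀ᶠ k in atTop, a k < c + ε / 2 :=
        hac.eventually_lt_const (by linarith)
      have h2 : ∀ᶠ k in atTop, N ≤ k ∧ 1 ≤ k := by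
        filter_upwards [eventually_ge_atTop N, eventually_ge_atTop 1] with k h h' using ⟨h, h'⟩
      obtain ⟨k, hk1, hk2⟩ := (h1.and h2).exists
      exact ⟨k, hk2.1, hk2.2, by linarith⟩
    by_contra hcon
    push_neg at hcon
    have hγ : ∀ l ∈ Finset.Ico N₁ (2 * N₁), ε / (2 * N₁) < a l - a (l + 1) := by
      intro l hl
      rw [Finset.mem_Ico] at hl
      have hal : a l ≤ a N₁ := haanti hl.1
      have h1 : a l - c ≤ ε := by
        have := hca l
        linarith
      have h2 := hcon l (hN₁N.trans hl.1) h1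
      have hl2 : (l : ℝ) + 1 ≤ 2 * N₁ := by
        have : l + 1 ≤ 2 * N₁ := hl.2
        exact_mod_cast this
      have hγ0 : 0 ≤ a l - a (l + 1) := by
        have := haanti (Nat.le_succ l)
        linarith
      have hN₁pos : (0 : ℝ) < 2 * N₁ := by positivity
      rw [div_lt_iff₀ hN₁pos]
      calc ε < ((l : ℝ) + 1) * (a l - a (l + 1)) := h2
      _ ≤ 2 * N₁ * (a l - a (l + 1)) := mul_le_mul_of_nonneg_right hl2 hγ0
      _ = (a l - a (l + 1)) * (2 * N₁) := by ring
    have hsumtel : ∑ l ∈ Finset.Ico N₁ (2 * N₁), (a l - a (l + 1)) = a N₁ - a (2 * N₁) := by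
      have : ∀ B, N₁ ≤ B → ∑ l ∈ Finset.Ico N₁ B, (a l - a (l + 1)) = a N₁ - a B := by
        intro B hB
        induction B, hB using Nat.le_induction with
        | base => simp
        | succ B hB ih => rw [Finset.sum_Ico_succ_top hB, ih]; ring
      exact this _ (by omega)
    have hne' : (Finset.Ico N₁ (2 * N₁)).Nonempty := by
      rw [Finset.nonempty_Ico]
      omega
    have h2 : ∑ _l ∈ Finset.Ico N₁ (2 * N₁), ε / (2 * N₁)
        < ∑ l ∈ Finset.Ico N₁ (2 * N₁), (a l - a (l + 1)) :=
      Finset.sum_lt_sum_of_nonempty hne' hγ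
    rw [Finset.sum_const, hsumtel, Nat.card_Ico] at h2
    have hcard : 2 * N₁ - N₁ = N₁ := by omega
    rw [hcard] at h2
    have h3 : (N₁ : ℝ) • (ε / (2 * N₁)) = ε / 2 := by
      rw [smul_eq_mul]
      field_simp
    rw [nsmul_eq_mul] at h2
    have h4 : (N₁ : ℝ) * (ε / (2 * N₁)) = ε / 2 := by
      field_simp
    rw [h4] at h2
    have h5 : a N₁ - a (2 * N₁) ≤ ε / 2 := by
      have := hca (2 * N₁)
      linarith
    linarith
  -- recursive subsequence selection
  have hsel4 : ∀ r N : ℕ, ∃ j, N ≤ j ∧ a j - c ≤ (1 / 4 : ℝ) ^ r ∧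
      ((j : ℝ) + 1) * (a j - a (j + 1)) ≤ (1 / 4 : ℝ) ^ r :=
    fun r N => hsel _ (by positivity) N
  choose F hF1 hF2 hF3 using hsel4
  set J : ℕ → ℕ := fun r => Nat.rec (F 0 0) (fun r jr => F (r + 1) (jr + 1)) r with hJ
  have hJs : ∀ r, J (r + 1) = F (r + 1) (J r + 1) := fun r => rfl
  have hJprop : ∀ r, a (J r) - c ≤ (1 / 4 : ℝ) ^ r ∧
      ((J r : ℝ) + 1) * (a (J r) - a (J r + 1)) ≤ (1 / 4 : ℝ) ^ r := by
    intro r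
    cases r with
    | zero => exact ⟨hF2 0 0, hF3 0 0⟩
    | succ r => exact ⟨hF2 (r + 1) (J r + 1), hF3 (r + 1) (J r + 1)⟩
  have hJmono : StrictMono J := by
    apply strictMono_nat_of_lt_succ
    intro r
    have := hF1 (r + 1) (J r + 1)
    rw [hJs r]
    omega
  have hJle : ∀ r s : ℕ, r < s → J r + 1 ≤ J s := fun r s hrs => hJmono hrs
  set u : ℕ → H := fun r => e ((J r + 1) * n) with hu
  -- γ bound at each selected index
  have hγr : ∀ r, a (J r) - a (J r + 1) ≤ (1 / 4 : ℝ) ^ r := by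
    intro r
    have h1 := (hJprop r).2
    have h2 : (1 : ℝ) ≤ (J r : ℝ) + 1 := by
      have : (0 : ℝ) ≤ (J r : ℝ) := Nat.cast_nonneg _
      linarith
    have hγ0 : 0 ≤ a (J r) - a (J r + 1) := by
      have := haanti (Nat.le_succ (J r))
      linarith
    nlinarith
  -- pairwise distance bound
  have hpair : ∀ r s : ℕ, r < s → ‖u s - u r‖ ^ 2 ≤ (1 + 2 * (n : ℝ)) * (1 / 2 : ℝ) ^ r := by
    intro r s hrs
    have hkj : J r + 1 ≤ J s := hJle r s hrs
    have h := hdist2 (J r + 1) (J s) hkj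
    have hX : a (J r + 1) - a (J s + 1) ≤ (1 / 4 : ℝ) ^ r := by
      have h1 : a (J r + 1) ≤ a (J r) := haanti (Nat.le_succ _)
      have h2 := (hJprop r).1
      have h3 := hca (J s + 1)
      linarith
    have hX0 : 0 ≤ a (J r + 1) - a (J s + 1) := by
      have := haanti (show J r + 1 ≤ J s + 1 by omega)
      linarith
    have hγs : ((J s : ℝ) + 1) * (a (J s) - a (J s + 1)) ≤ 1 := by
      have h1 := (hJprop s).2
      have h2 : ((1 : ℝ) / 4) ^ s ≤ 1 := by
        apply pow_le_one₀ <;> norm_num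
      linarith
    have hγs0 : 0 ≤ a (J s) - a (J s + 1) := by
      have := haanti (Nat.le_succ (J s))
      linarith
    have harg : ((n : ℝ) * (a (J s) - a (J s + 1))) *
        (((J s : ℝ) + 1) * n * (a (J r + 1) - a (J s + 1)))
        ≤ (n : ℝ) ^ 2 * (1 / 4 : ℝ) ^ r := by
      have heq : ((n : ℝ) * (a (J s) - a (J s + 1))) *
          (((J s : ℝ) + 1) * n * (a (J r + 1) - a (J s + 1)))
          = (n : ℝ) ^ 2 * ((((J s : ℝ) + 1) * (a (J s) - a (J s + 1))) *
            (a (J r + 1) - a (J s + 1))) := by ring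
      rw [heq]
      have hn0 : (0 : ℝ) ≤ (n : ℝ) ^ 2 := sq_nonneg _
      apply mul_le_mul_of_nonneg_left _ hn0
      have h1 : (((J s : ℝ) + 1) * (a (J s) - a (J s + 1))) * (a (J r + 1) - a (J s + 1))
          ≤ 1 * (a (J r + 1) - a (J s + 1)) := by
        apply mul_le_mul_of_nonneg_right hγs hX0
      calc (((J s : ℝ) + 1) * (a (J s) - a (J s + 1))) * (a (J r + 1) - a (J s + 1))
          ≤ 1 * (a (J r + 1) - a (J s + 1)) := h1
      _ = a (J r + 1) - a (J s + 1) := one_mul _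
      _ ≤ (1 / 4 : ℝ) ^ r := hX
    have hsqrt : Real.sqrt (((n : ℝ) * (a (J s) - a (J s + 1))) *
        (((J s : ℝ) + 1) * n * (a (J r + 1) - a (J s + 1))))
        ≤ (n : ℝ) * (1 / 2 : ℝ) ^ r := by
      have h1 : Real.sqrt (((n : ℝ) * (a (J s) - a (J s + 1))) *
          (((J s : ℝ) + 1) * n * (a (J r + 1) - a (J s + 1))))
          ≤ Real.sqrt ((n : ℝ) ^ 2 * (1 / 4 : ℝ) ^ r) := Real.sqrt_le_sqrt harg
      have h2 : (n : ℝ) ^ 2 * (1 / 4 : ℝ) ^ r = ((n : ℝ) * (1 / 2 : ℝ) ^ r) ^ 2 := by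
        have h4 : (1 / 4 : ℝ) = (1 / 2 : ℝ) ^ 2 := by norm_num
        rw [h4, ← pow_mul, mul_pow, ← pow_mul, mul_comm 2 r]
      rw [h2, Real.sqrt_sq (by positivity)] at h1
      exact h1
    have hquarter : ((1 : ℝ) / 4) ^ r ≤ ((1 : ℝ) / 2) ^ r := by
      apply pow_le_pow_left₀ <;> norm_num
    calc ‖u s - u r‖ ^ 2 = ‖e ((J s + 1) * n) - e ((J r + 1) * n)‖ ^ 2 := rfl
    _ ≤ (a (J r + 1) - a (J s + 1))
        + 2 * Real.sqrt (((n : ℝ) * (a (J s) - a (J s + 1))) *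
            (((J s : ℝ) + 1) * n * (a (J r + 1) - a (J s + 1)))) := h
    _ ≤ (1 / 4 : ℝ) ^ r + 2 * ((n : ℝ) * (1 / 2 : ℝ) ^ r) := by linarith
    _ ≤ (1 + 2 * (n : ℝ)) * (1 / 2 : ℝ) ^ r := by nlinarith [hquarter]
  -- Cauchy sequence
  have hCn0 : (0 : ℝ) ≤ 1 + 2 * (n : ℝ) := by positivity
  have hcauchy : CauchySeq u := by
    apply cauchySeq_of_le_tendsto_0 (fun N => Real.sqrt ((1 + 2 * (n : ℝ)) * (1 / 2 : ℝ) ^ N))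
    · intro r s N hr hs
      have key : ∀ r' s' : ℕ, N ≤ r' → r' < s' →
          dist (u s') (u r') ≤ Real.sqrt ((1 + 2 * (n : ℝ)) * (1 / 2 : ℝ) ^ N) := by
        intro r' s' hr' hrs'
        rw [dist_eq_norm]
        apply aux_le_sqrt (norm_nonneg _)
        calc ‖u s' - u r'‖ ^ 2 ≤ (1 + 2 * (n : ℝ)) * (1 / 2 : ℝ) ^ r' := hpair r' s' hrs'
        _ ≤ (1 + 2 * (n : ℝ)) * (1 / 2 : ℝ) ^ N := by
            apply mul_le_mul_of_nonneg_left _ hCn0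
            apply pow_le_pow_of_le_one (by norm_num) (by norm_num) hr'
      rcases lt_trichotomy r s with h | h | h
      · rw [dist_comm]
        exact key r s hr h
      · simp [h, Real.sqrt_nonneg]
      · exact key s r hs h
    · have h1 : Tendsto (fun N : ℕ => (1 + 2 * (n : ℝ)) * (1 / 2 : ℝ) ^ N) atTop (𝓝 0) := by
        have := (tendsto_pow_atTop_nhds_zero_of_lt_one
          (show (0:ℝ) ≤ 1/2 by norm_num) (show (1/2:ℝ) < 1 by norm_num)).const_mul
          (1 + 2 * (n : ℝ))
        simpa using this
      have h2 := (Real.continuous_sqrt.tendsto 0).comp h1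
      simpa only [Function.comp_def, Real.sqrt_zero] using h2
  obtain ⟨ζ, hζ⟩ := cauchySeq_tendsto_of_complete hcauchy
  -- the limit is orthogonal to directions of Mset
  have hζperp : ∀ y ∈ Mset, ⟪ζ, y - q⟫ = 0 := by
    intro y hy
    have h1 : Tendsto (fun r => ⟪u r, y - q⟫) atTop (𝓝 ⟪ζ, y - q⟫) :=
      hζ.inner tendsto_const_nhds
    have h2 : (fun r => ⟪u r, y - q⟫) = fun _ => (0 : ℝ) :=
      funext fun r => hEperp _ y hy
    rw [h2] at h1
    exact (tendsto_nhds_unique h1 tendsto_const_nhds).symm ▸ rfl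
  -- the limit (translated) belongs to Mset
  have hζM : ζ + q ∈ Mset := by
    refine Set.mem_iInter₂.2 fun i hi => ?_
    rw [Finset.mem_Icc] at hi
    obtain ⟨i', rfl⟩ : ∃ i', i = i' + 1 := ⟨i - 1, by omega⟩
    have hi'n : i' < n := by omega
    have hpM : ∀ r, g (J r * n + i' + 1) ∈ M (i' + 1) := by
      intro r
      have := hgmem (J r * n + i')
      rwa [hmod _ _ hi'n] at this
    have hconv : Tendsto (fun r => g (J r * n + i' + 1)) atTop (𝓝 (ζ + q)) := by
      have hdiff : ∀ r, ‖u r - e (J r * n + i' + 1)‖ ≤ Real.sqrt ((n : ℝ) * (1 / 4 : ℝ) ^ r) := by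
        intro r
        have hle1 : J r * n + i' + 1 ≤ (J r + 1) * n := by
          have : (J r + 1) * n = J r * n + n := by ring
          omega
        have hjnle : J r * n ≤ (J r + 1) * n := Nat.mul_le_mul_right n (by omega)
        have hstep : ‖u r - e (J r * n + i' + 1)‖
            ≤ ∑ l ∈ Finset.Ico (J r * n) ((J r + 1) * n), d l := by
          calc ‖u r - e (J r * n + i' + 1)‖
              = ‖e ((J r + 1) * n) - e (J r * n + i' + 1)‖ := rfl
          _ ≤ ∑ l ∈ Finset.Ico (J r * n + i' + 1) ((J r + 1) * n), d l := hdist _ _ hle1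
          _ ≤ ∑ l ∈ Finset.Ico (J r * n) ((J r + 1) * n), d l :=
              Finset.sum_le_sum_of_subset_of_nonneg
                (Finset.Ico_subset_Ico (by omega) le_rfl) (fun l' _ _ => hd0 l')
        refine hstep.trans (aux_le_sqrt (Finset.sum_nonneg fun l _ => hd0 l) ?_)
        have h1 := aux_sq_sum_le (s := Finset.Ico (J r * n) ((J r + 1) * n)) (f := d)
        rw [hsumd _ _ hjnle] at h1
        have hcard : (Finset.Ico (J r * n) ((J r + 1) * n)).card = n := by
          rw [Nat.card_Ico]
          have : (J r + 1) * n = J r * n + n := by ring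
          omega
        rw [hcard] at h1
        have h2 : b (J r * n) - b ((J r + 1) * n) = a (J r) - a (J r + 1) := by
          simp only [ha]
        rw [h2] at h1
        calc (∑ l ∈ Finset.Ico (J r * n) ((J r + 1) * n), d l) ^ 2
            ≤ (n : ℝ) * (a (J r) - a (J r + 1)) := h1
        _ ≤ (n : ℝ) * (1 / 4 : ℝ) ^ r := by
            apply mul_le_mul_of_nonneg_left (hγr r) (by positivity)
      have h0 : Tendsto (fun r => u r - e (J r * n + i' + 1)) atTop (𝓝 0) := by
        apply squeeze_zero_norm hdiff
        have h1 : Tendsto (fun r : ℕ => (n : ℝ) * (1 / 4 : ℝ) ^ r) atTop (𝓝 0) := by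
          have := (tendsto_pow_atTop_nhds_zero_of_lt_one
            (show (0:ℝ) ≤ 1/4 by norm_num) (show (1/4:ℝ) < 1 by norm_num)).const_mul (n : ℝ)
          simpa using this
        have h2 := (Real.continuous_sqrt.tendsto 0).comp h1
        simpa only [Function.comp_def, Real.sqrt_zero] using h2
      have h3 : Tendsto (fun r => e (J r * n + i' + 1) + q) atTop (𝓝 (ζ - 0 + q)) :=
        ((hζ.sub h0).add_const q).congr (by intro r; simp)
      simp only [sub_zero] at h3
      have h4 : (fun r => e (J r * n + i' + 1) + q) = fun r => g (J r * n + i' + 1) := by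
        funext r
        simp [he]
      rwa [h4] at h3
    exact (hclosed (i' + 1) (by rw [Finset.mem_Icc]; omega)).mem_of_tendsto hconv
      (Filter.Eventually.of_forall fun r => hpM r)
  -- hence the limit is zero
  have hζ0 : ζ = 0 := by
    have h1 := hζperp (ζ + q) hζM
    have h2 : ζ + q - q = ζ := by abel
    rw [h2] at h1
    exact inner_self_eq_zero.1 h1
  -- hence c = 0 and a → 0
  have h1 : Tendsto (fun r => a (J r + 1)) atTop (𝓝 0) := by
    have h2 : Tendsto (fun r => ‖u r‖ ^ 2) atTop (𝓝 (‖ζ‖ ^ 2)) := (hζ.norm).pow 2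
    rw [hζ0] at h2
    simp only [norm_zero, zero_pow, ne_eq, OfNat.ofNat_ne_zero, not_false_eq_true] at h2
    have h3 : (fun r => ‖u r‖ ^ 2) = fun r => a (J r + 1) := by
      funext r
      simp only [hu, hb, ha]
    rwa [h3] at h2
  have hJtop : Tendsto (fun r => J r + 1) atTop atTop := by
    exact tendsto_atTop_mono (fun r => Nat.le_succ (J r)) hJmono.tendsto_atTop
  have h2 : Tendsto (fun r => a (J r + 1)) atTop (𝓝 c) := hac.comp hJtop
  have hc0 : c = 0 := tendsto_nhds_unique h2 h1
  have hae : Tendsto a atTop (𝓝 0) := hc0 ▸ hac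
  -- identify the iterates with the orbit
  have hQstep : ∀ k i, i ≤ n → g (k * n + i) = Q i (g (k * n)) := by
    intro k i hi
    induction i with
    | zero => simp [hQ0]
    | succ i ih =>
      have hin : i < n := by omega
      have h1 := ih (le_of_lt hin)
      have h2 : g (k * n + i + 1) = P (i + 1) (g (k * n + i)) := by
        rw [hgs, hmod k i hin]
      have h3 : k * n + (i + 1) = k * n + i + 1 := by omega
      rw [h3, h2, h1, hQ (i + 1) (by omega) hi]
      simp
  have hQg : ∀ k, g (k * n) = (Q n)^[k] x0 := by
    intro k
    induction k with
    | zero => simp [hg0]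
    | succ k ih =>
      have h3 : (k + 1) * n = k * n + n := by ring
      rw [h3, hQstep k n le_rfl, ih, Function.iterate_succ_apply']
  -- conclude
  have hnorm0 : Tendsto (fun k => ‖(Q n)^[k] x0 - q‖) atTop (𝓝 0) := by
    have heq : (fun k => ‖(Q n)^[k] x0 - q‖) = fun k => Real.sqrt (a k) := by
      funext k
      rw [← hQg k]
      have h5 : a k = ‖g (k * n) - q‖ ^ 2 := rfl
      rw [h5, Real.sqrt_sq (norm_nonneg _)]
    rw [heq]
    have h2 := (Real.continuous_sqrt.tendsto 0).comp hae
    simpa [Function.comp_def] using h2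
  have := tendsto_iff_norm_sub_tendsto_zero.2 hnorm0
  exact this
end

section
/- Let M_1, ..., M_n be closed affine subspaces of a real Hilbert space H with M := ∩_{i=1}^n M_i nonempty, let Q := P_{M_n} ⋯ P_{M_1}, and let x_0 ∈ H. Then for every x ∈ H and every m ∈ M, ⟨x − Q(x), P_M(x_0)⟩ = ⟨x − Q(x), m⟩. -/
open RealInnerProductSpace

lemma proj_perp {H : Type*} [NormedAddCommGroup H] [InnerProductSpace ℝ H]
    (S : AffineSubspace ℝ H) (P : H → H) (hP : IsProjOn (S : Set H) P)
    (u : H) {y : H} (hy : y ∈ S) : ⟪u - P u, y - P u⟫ = 0 := by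
  obtain ⟨hPu, hmin⟩ := hP u
  set c := ⟪u - P u, y - P u⟫ with hc
  set d := ‖y - P u‖ ^ 2 with hd
  have key : ∀ t : ℝ, 2 * t * c ≤ t ^ 2 * d := by
    intro t
    have hdir : (y - P u) ∈ S.direction := by
      have := AffineSubspace.vsub_mem_direction hy hPu
      simpa using this
    have hmem : t • (y - P u) + P u ∈ S := by
      have := AffineSubspace.vadd_mem_of_mem_direction
        (S.direction.smul_mem t hdir) hPu
      simpa using this
    have h1 := hmin _ hmem
    have h2 : ‖u - P u‖ ^ 2 ≤ ‖u - (t • (y - P u) + P u)‖ ^ 2 :=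
      pow_le_pow_left₀ (norm_nonneg _) h1 2
    have h3 : u - (t • (y - P u) + P u) = (u - P u) - t • (y - P u) := by abel
    have expand : ‖(u - P u) - t • (y - P u)‖ ^ 2
        = ‖u - P u‖ ^ 2 - 2 * (t * c) + t ^ 2 * d := by
      rw [norm_sub_sq_real, real_inner_smul_right, norm_smul, mul_pow, Real.norm_eq_abs, sq_abs, hc, hd]
      try ring
    rw [h3, expand] at h2
    linarith
  by_cases hd0 : d = 0
  · have : y - P u = 0 := by
      have := pow_eq_zero_iff (n := 2) (by norm_num) |>.mp hd0
      simpa using this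
    rw [hc, this, inner_zero_right]
  · have hdpos : 0 < d := lt_of_le_of_ne (by positivity) (Ne.symm hd0)
    have hk := key (c / d)
    have hc2 : c ^ 2 ≤ 0 := by
      have h1 : 2 * (c / d) * c = 2 * c ^ 2 / d := by ring
      have h2 : (c / d) ^ 2 * d = c ^ 2 / d := by field_simp
      rw [h1, h2] at hk
      have := (div_le_div_iff₀ hdpos hdpos).mp hk
      nlinarith
    have := le_antisymm hc2 (sq_nonneg c)
    exact pow_eq_zero_iff (n := 2) (by norm_num) |>.mp this

lemma proj_perp' {H : Type*} [NormedAddCommGroup H] [InnerProductSpace ℝ H]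
    (S : AffineSubspace ℝ H) (P : H → H) (hP : IsProjOn (S : Set H) P)
    (u : H) {a b : H} (ha : a ∈ S) (hb : b ∈ S) : ⟪u - P u, a - b⟫ = 0 := by
  have h1 := proj_perp S P hP u ha
  have h2 := proj_perp S P hP u hb
  have : a - b = (a - P u) - (b - P u) := by abel
  rw [this, inner_sub_right, h1, h2, sub_zero]

/-- For closed affine subspaces `M₁, …, Mₙ` with `Q = P_{Mₙ} ⋯ P_{M₁}` and
`M = ∩ᵢ Mᵢ ≠ ∅`, one has `⟨x − Q x, P_M x₀⟩ = ⟨x − Q x, m⟩` for all `x ∈ H` and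
`m ∈ M`. -/
theorem cyclic_projections_inner_eq_affine
    {H : Type*} [NormedAddCommGroup H] [InnerProductSpace ℝ H] [CompleteSpace H]
    (n : ℕ) (hn : 1 ≤ n)
    (M : ℕ → AffineSubspace ℝ H)
    (hclosed : ∀ i ∈ Finset.Icc 1 n, IsClosed (M i : Set H))
    (hne : (⋂ i ∈ Finset.Icc 1 n, (M i : Set H)).Nonempty)
    (P : ℕ → H → H)
    (hP : ∀ i ∈ Finset.Icc 1 n, IsProjOn (M i : Set H) (P i))
    (PM : H → H)
    (hPM : IsProjOn (⋂ i ∈ Finset.Icc 1 n, (M i : Set H)) PM)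
    (Q : ℕ → H → H)
    (hQ0 : Q 0 = id)
    (hQ : ∀ i, 1 ≤ i → i ≤ n → Q i = P i ∘ Q (i - 1))
    (x0 : H) (x : H) (m : H) (hm : m ∈ ⋂ i ∈ Finset.Icc 1 n, (M i : Set H)) :
    ⟪x - Q n x, PM x0⟫ = ⟪x - Q n x, m⟫ := by
  have hPM0 : PM x0 ∈ ⋂ i ∈ Finset.Icc 1 n, (M i : Set H) := (hPM x0).1
  have hmem : ∀ i, 1 ≤ i → i ≤ n → PM x0 ∈ M i ∧ m ∈ M i := by
    intro i h1 h2
    have hi : i ∈ Finset.Icc 1 n := Finset.mem_Icc.mpr ⟨h1, h2⟩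
    constructor
    · exact Set.mem_iInter₂.mp hPM0 i hi
    · exact Set.mem_iInter₂.mp hm i hi
  have main : ∀ k, k ≤ n → ⟪x - Q k x, PM x0 - m⟫ = 0 := by
    intro k
    induction k with
    | zero => intro _; simp [hQ0]
    | succ j ih =>
      intro hjn
      have hkey := hQ (j + 1) (Nat.le_add_left 1 j) hjn
      have hsplit : x - Q (j + 1) x
          = (x - Q j x) + (Q j x - P (j + 1) (Q j x)) := by
        rw [hkey]; simp only [Function.comp_apply]; abel
      obtain ⟨hmem1, hmem2⟩ := hmem (j + 1) (Nat.le_add_left 1 j) hjn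
      have hperp : ⟪Q j x - P (j + 1) (Q j x), PM x0 - m⟫ = 0 :=
        proj_perp' (M (j + 1)) (P (j + 1))
          (hP  (j + 1) (Finset.mem_Icc.mpr ⟨Nat.le_add_left 1 j, hjn⟩))
          (Q j x) hmem1 hmem2
      rw [hsplit, inner_add_left, hperp, ih (le_of_lt hjn), add_zero]
  have := main n le_rfl
  rw [inner_sub_right] at this
  linarith
end

section
/- Let M_1, ..., M_n be closed affine subspaces of a real Hilbert space H with M := ∩_{i=1}^n M_i nonempty. Let Q := P_{M_n} ⋯ P_{M_1}, Q_i := P_{M_i} ⋯ P_{M_1} for i ∈ {1,...,n}, and Q_0 := I. Fix x_0 ∈ H and x_k ∈ H with Q(x_k) ≠ x_k. Then the unique minimiser over t ∈ ℝ of ‖x_k + t(Q(x_k) − x_k) − P_M(x_0)‖² is t_k = 1/2 + (Σ_{i=1}^n ‖Q_{i−1}(x_k) − Q_i(x_k)‖²) / (2‖x_k − Q(x_k)‖²). -/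
open RealInnerProductSpace

lemma projOrth {H : Type*} [NormedAddCommGroup H] [InnerProductSpace ℝ H]
    {M : AffineSubspace ℝ H} {P : H → H} (hP : IsProjOn (M : Set H) P)
    (x : H) {y : H} (hy : y ∈ M) : ⟪x - P x, y - P x⟫ = 0 := by
  obtain ⟨hPx, hmin⟩ := hP x
  set v := P x with hv
  set c : ℝ := ⟪x - v, y - v⟫ with hc
  set B : ℝ := ‖y - v‖ ^ 2 with hB
  have hBnn : 0 ≤ B := sq_nonneg _
  have key : ∀ θ : ℝ, 2 * θ * c ≤ θ ^ 2 * B := by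
    intro θ
    have hmem : θ • (y - v) + v ∈ M := by
      have := AffineSubspace.smul_vsub_vadd_mem M θ hy hPx hPx
      simpa using this
    have h1 : ‖x - v‖ ≤ ‖x - (θ • (y - v) + v)‖ := hmin _ hmem
    have h2 : ‖x - (θ • (y - v) + v)‖ ^ 2
        = ‖x - v‖ ^ 2 - 2 * θ * c + θ ^ 2 * B := by
      have hxv : x - (θ • (y - v) + v) = (x - v) - θ • (y - v) := by abel
      rw [hxv, norm_sub_sq_real, real_inner_smul_right, norm_smul]
      simp only [Real.norm_eq_abs]
      rw [mul_pow, sq_abs]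
      ring
    nlinarith [norm_nonneg (x - v), norm_nonneg (x - (θ • (y - v) + v))]
  have hD : (0:ℝ) < B + 1 := by linarith
  set θ : ℝ := c / (B + 1) with hθ
  have hcθ : c = θ * (B + 1) := by rw [hθ]; field_simp
  have h' : 2 * θ * (θ * (B + 1)) ≤ θ ^ 2 * B := by rw [← hcθ]; exact key θ
  have hθ2 : θ ^ 2 = 0 := le_antisymm (by nlinarith) (sq_nonneg θ)
  have hθ0 : θ = 0 := by
    have := sq_eq_zero_iff.mp hθ2
    exact this
  have hc0 : c = 0 := by rw [hcθ, hθ0]; ring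
  exact hc0

lemma quadExpand {H : Type*} [NormedAddCommGroup H] [InnerProductSpace ℝ H]
    (u d : H) (t : ℝ) :
    ‖u + t • d‖ ^ 2 = ‖u‖ ^ 2 + 2 * t * ⟪u, d⟫ + t ^ 2 * ‖d‖ ^ 2 := by
  rw [norm_add_sq_real, real_inner_smul_right, norm_smul]
  simp only [Real.norm_eq_abs]
  rw [mul_pow, sq_abs]
  ring

/-- The Gearhart–Koshy step size for affine subspaces: if `Q xₖ ≠ xₖ`, then the unique
minimiser over `t ∈ ℝ` of `‖xₖ + t (Q xₖ − xₖ) − P_M x₀‖²` is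
`tₖ = ½ + (Σᵢ ‖Q_{i−1} xₖ − Qᵢ xₖ‖²) / (2 ‖xₖ − Q xₖ‖²)`. -/
theorem gearhart_koshy_step_affine
    {H : Type*} [NormedAddCommGroup H] [InnerProductSpace ℝ H] [CompleteSpace H]
    (n : ℕ) (hn : 1 ≤ n)
    (M : ℕ → AffineSubspace ℝ H)
    (hclosed : ∀ i ∈ Finset.Icc 1 n, IsClosed (M i : Set H))
    (hne : (⋂ i ∈ Finset.Icc 1 n, (M i : Set H)).Nonempty)
    (P : ℕ → H → H)
    (hP : ∀ i ∈ Finset.Icc 1 n, IsProjOn (M i : Set H) (P i))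
    (PM : H → H)
    (hPM : IsProjOn (⋂ i ∈ Finset.Icc 1 n, (M i : Set H)) PM)
    (Q : ℕ → H → H)
    (hQ0 : Q 0 = id)
    (hQ : ∀ i, 1 ≤ i → i ≤ n → Q i = P i ∘ Q (i - 1))
    (x0 xk : H) (hxk : Q n xk ≠ xk)
    (tk : ℝ)
    (htk : tk = 1 / 2 + (∑ i ∈ Finset.Icc 1 n, ‖Q (i - 1) xk - Q i xk‖ ^ 2)
      / (2 * ‖xk - Q n xk‖ ^ 2)) :
    (∀ t : ℝ, ‖xk + tk • (Q n xk - xk) - PM x0‖ ^ 2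
        ≤ ‖xk + t • (Q n xk - xk) - PM x0‖ ^ 2) ∧
    (∀ t : ℝ, (∀ s : ℝ, ‖xk + t • (Q n xk - xk) - PM x0‖ ^ 2
        ≤ ‖xk + s • (Q n xk - xk) - PM x0‖ ^ 2) → t = tk) := by
  set m := PM x0 with hm
  set a : ℕ → H := fun j => Q j xk with ha
  set d : H := Q n xk - xk with hd
  -- m belongs to every M i
  have hmM : ∀ i ∈ Finset.Icc 1 n, m ∈ M i := by
    intro i hi
    have hmem : m ∈ ⋂ i ∈ Finset.Icc 1 n, (M i : Set H) := (hPM x0).1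
    simp only [Set.mem_iInter] at hmem
    exact hmem i hi
  -- orthogonality at each step
  have horth : ∀ i ∈ Finset.Icc 1 n, ⟪a (i - 1) - a i, m - a i⟫ = 0 := by
    intro i hi
    obtain ⟨hi1, hi2⟩ := Finset.mem_Icc.mp hi
    have hai : a i = P i (a (i - 1)) := by
      rw [ha]; simp only; rw [hQ i hi1 hi2]; rfl
    rw [hai]
    exact projOrth (hP i hi) (a (i - 1)) (hmM i hi)
  -- telescoping identity
  have hind : ∀ j, j ≤ n →
      2 * ⟪m - xk, xk - a j⟫ + ‖xk - a j‖ ^ 2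
        + (∑ i ∈ Finset.Icc 1 j, ‖a (i - 1) - a i‖ ^ 2) = 0 := by
    intro j
    induction j with
    | zero =>
      intro _
      simp [ha, hQ0]
    | succ j ih =>
      intro hjn
      have hj : j ≤ n := Nat.le_of_succ_le hjn
      have IH := ih hj
      have hsum : ∑ i ∈ Finset.Icc 1 (j + 1), ‖a (i - 1) - a i‖ ^ 2
          = (∑ i ∈ Finset.Icc 1 j, ‖a (i - 1) - a i‖ ^ 2) + ‖a j - a (j + 1)‖ ^ 2 := by
        rw [Finset.sum_Icc_succ_top (Nat.one_le_iff_ne_zero.mpr (Nat.succ_ne_zero j))]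
        simp
      have ho : ⟪a j - a (j + 1), m - a (j + 1)⟫ = 0 := by
        have := horth (j + 1) (Finset.mem_Icc.mpr ⟨Nat.one_le_iff_ne_zero.mpr (Nat.succ_ne_zero j), hjn⟩)
        simpa using this
      have h1 : ‖xk - a (j + 1)‖ ^ 2 = ‖xk - a j‖ ^ 2
          + 2 * ⟪xk - a j, a j - a (j + 1)⟫ + ‖a j - a (j + 1)‖ ^ 2 := by
        have e : xk - a (j + 1) = (xk - a j) + (a j - a (j + 1)) := by abel
        rw [e, norm_add_sq_real]
      have h2 : ⟪m - xk, xk - a (j + 1)⟫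
          = ⟪m - xk, xk - a j⟫ + ⟪m - xk, a j - a (j + 1)⟫ := by
        have e : xk - a (j + 1) = (xk - a j) + (a j - a (j + 1)) := by abel
        rw [e, inner_add_right]
      have h3 : ⟪m - xk, a j - a (j + 1)⟫
          = ⟪m - a (j + 1), a j - a (j + 1)⟫ + ⟪a (j + 1) - xk, a j - a (j + 1)⟫ := by
        have e : m - xk = (m - a (j + 1)) + (a (j + 1) - xk) := by abel
        rw [e, inner_add_left]
      have h4 : ⟪a (j + 1) - xk, a j - a (j + 1)⟫
          = -⟪xk - a j, a j - a (j + 1)⟫ - ‖a j - a (j + 1)‖ ^ 2 := by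
        have e : a (j + 1) - xk = -(xk - a j) + -(a j - a (j + 1)) := by abel
        rw [e, inner_add_left, inner_neg_left, inner_neg_left,
          real_inner_self_eq_norm_sq]
        ring
      have h5 : ⟪m - a (j + 1), a j - a (j + 1)⟫ = 0 := by
        rw [real_inner_comm]; exact ho
      rw [hsum]
      linarith [h1, h2, h3, h4, h5, IH]
  have hFn := hind n le_rfl
  -- key scalar identity
  have hdne : d ≠ 0 := fun h => hxk (by rwa [hd, sub_eq_zero] at h)
  have hdpos : 0 < ‖d‖ ^ 2 := pow_pos (norm_pos_iff.mpr hdne) 2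
  set S : ℝ := ∑ i ∈ Finset.Icc 1 n, ‖a (i - 1) - a i‖ ^ 2 with hS
  have hSnn : 0 ≤ S := Finset.sum_nonneg fun i _ => sq_nonneg _
  have hnorm : ‖xk - a n‖ = ‖d‖ := by rw [hd]; exact norm_sub_rev _ _
  have hinner : ⟪m - xk, d⟫ = -⟪m - xk, xk - a n⟫ := by
    have e : d = -(xk - a n) := by rw [hd]; abel
    rw [e, inner_neg_right]
  have hkey : ⟪m - xk, d⟫ = tk * ‖d‖ ^ 2 := by
    have htk' : tk = 1 / 2 + S / (2 * ‖d‖ ^ 2) := by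
      rw [htk, hS]
      congr 2
      rw [hnorm]
    rw [htk', hinner]
    have : 2 * ⟪m - xk, xk - a n⟫ + ‖d‖ ^ 2 + S = 0 := by
      rw [← hnorm]; exact hFn
    field_simp
    linear_combination (-1 : ℝ) * this
  -- quadratic expansion
  have hg : ∀ t : ℝ, ‖xk + t • d - m‖ ^ 2
      = ‖xk - m‖ ^ 2 - 2 * t * tk * ‖d‖ ^ 2 + t ^ 2 * ‖d‖ ^ 2 := by
    intro t
    have e : xk + t • d - m = (xk - m) + t • d := by abel
    rw [e, quadExpand]
    have : ⟪xk - m, d⟫ = -(tk * ‖d‖ ^ 2) := by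
      rw [← hkey]
      rw [show xk - m = -(m - xk) by abel, inner_neg_left]
    rw [this]; ring
  constructor
  · intro t
    rw [hg t, hg tk]
    nlinarith [sq_nonneg (t - tk), hdpos]
  · intro t hmin
    have := hmin tk
    rw [hg t, hg tk] at this
    have hsq : (t - tk) ^ 2 * ‖d‖ ^ 2 ≤ 0 := by nlinarith
    have hA : (t - tk) ^ 2 ≤ 0 := by
      by_contra hh
      push_neg at hh
      nlinarith [mul_pos hh hdpos]
    have : t - tk = 0 := by
      have := le_antisymm hA (sq_nonneg _)
      exact pow_eq_zero_iff (two_ne_zero) |>.mp this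
    linarith
end

section
/- Let M_1, ..., M_n be closed affine subspaces of a real Hilbert space H with M := ∩_{i=1}^n M_i nonempty, and for each i let M_i' denote the linear subspace parallel to M_i. Define c_i := c(M_i', ∩_{j=i+1}^n M_j') for i ∈ {1,...,n−1} and c := (1 − ∏_{i=1}^{n−1}(1 − c_i²))^{1/2}. Let Q := P_{M_n} ⋯ P_{M_1}, Q_i := P_{M_i} ⋯ P_{M_1} for i ∈ {1,...,n}, Q_0 := I, and let (x_k) be generated from x_0 ∈ H by x_{k+1} := x_k + t_k (Q(x_k) − x_k), where t_k := 1/2 + (Σ_{i=1}^n ‖Q_{i−1}(x_k) − Q_i(x_k)‖²)/(2‖x_k − Q(x_k)‖²) if Q(x_k) ≠ x_k and t_k := 1 otherwise. Then there exists a sequence (f_k) with f_k ∈ [0,1] for all k such that for every k ∈ ℕ, ‖x_k − P_M(x_0)‖ ≤ (∏_{i=1}^k f_i) c^k ‖x_0 − P_M(x_0)‖. -/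
open RealInnerProductSpace

/-- The cosine of the Friederichs angle between two (closed) linear subspaces. -/
noncomputable def friedrichsCos {H : Type*} [NormedAddCommGroup H]
    [InnerProductSpace ℝ H] (A B : Submodule ℝ H) : ℝ :=
  sSup {r : ℝ | ∃ a ∈ A ⊓ (A ⊓ B)ᗮ, ∃ b ∈ B ⊓ (A ⊓ B)ᗮ,
    ‖a‖ = 1 ∧ ‖b‖ = 1 ∧ r = |⟪a, b⟫|}

set_option maxHeartbeats 1000000

open Submodule

theorem orthogonalProjection_eq_self_iff {H : Type*} [NormedAddCommGroup H] [InnerProductSpace ℝ H]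
    {K : Submodule ℝ H} [K.HasOrthogonalProjection] {v : H} :
    (orthogonalProjection K v : H) = v ↔ v ∈ K :=
  Submodule.starProjection_eq_self_iff

theorem sub_orthogonalProjection_mem_orthogonal {H : Type*} [NormedAddCommGroup H]
    [InnerProductSpace ℝ H] {K : Submodule ℝ H} [K.HasOrthogonalProjection] (v : H) :
    v - (orthogonalProjection K v : H) ∈ Kᗮ :=
  Submodule.sub_starProjection_mem_orthogonal v

theorem orthogonalProjection_inner_eq_zero {H : Type*} [NormedAddCommGroup H]
    [InnerProductSpace ℝ H] {K : Submodule ℝ H} [K.HasOrthogonalProjection] (v w : H)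
    (hw : w ∈ K) : ⟪v - (orthogonalProjection K v : H), w⟫ = 0 :=
  Submodule.starProjection_inner_eq_zero v w hw

section Aux
variable {H : Type*} [NormedAddCommGroup H] [InnerProductSpace ℝ H]

variable {H : Type*} [NormedAddCommGroup H] [InnerProductSpace ℝ H] (A B : Submodule ℝ H)

lemma fcSet_bdd : BddAbove {r : ℝ | ∃ a ∈ A ⊓ (A ⊓ B)ᗮ, ∃ b ∈ B ⊓ (A ⊓ B)ᗮ,
    ‖a‖ = 1 ∧ ‖b‖ = 1 ∧ r = |⟪a, b⟫|} := by
  refine ⟨1, ?_⟩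
  rintro r ⟨a, -, b, -, ha, hb, rfl⟩
  calc |⟪a, b⟫| ≤ ‖a‖ * ‖b‖ := abs_real_inner_le_norm a b
    _ = 1 := by rw [ha, hb, mul_one]

lemma friedrichsCos_nonneg : 0 ≤ friedrichsCos A B := by
  unfold friedrichsCos
  by_cases h : {r : ℝ | ∃ a ∈ A ⊓ (A ⊓ B)ᗮ, ∃ b ∈ B ⊓ (A ⊓ B)ᗮ,
      ‖a‖ = 1 ∧ ‖b‖ = 1 ∧ r = |⟪a, b⟫|}.Nonempty
  · obtain ⟨r, hr⟩ := h
    obtain ⟨a, ha1, b, hb1, ha2, hb2, rfl⟩ := hr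
    exact le_trans (abs_nonneg _) (le_csSup (fcSet_bdd A B) ⟨a, ha1, b, hb1, ha2, hb2, rfl⟩)
  · rw [Set.not_nonempty_iff_eq_empty] at h
    rw [h, Real.sSup_empty]

lemma friedrichsCos_le_one : friedrichsCos A B ≤ 1 := by
  unfold friedrichsCos
  by_cases h : {r : ℝ | ∃ a ∈ A ⊓ (A ⊓ B)ᗮ, ∃ b ∈ B ⊓ (A ⊓ B)ᗮ,
      ‖a‖ = 1 ∧ ‖b‖ = 1 ∧ r = |⟪a, b⟫|}.Nonempty
  · refine csSup_le h ?_
    rintro r ⟨a, -, b, -, ha, hb, rfl⟩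
    calc |⟪a, b⟫| ≤ ‖a‖ * ‖b‖ := abs_real_inner_le_norm a b
      _ = 1 := by rw [ha, hb, mul_one]
  · rw [Set.not_nonempty_iff_eq_empty] at h
    rw [h, Real.sSup_empty]; norm_num

lemma abs_inner_le_friedrichsCos {a b : H} (ha : a ∈ A ⊓ (A ⊓ B)ᗮ) (hb : b ∈ B ⊓ (A ⊓ B)ᗮ) :
    |⟪a, b⟫| ≤ friedrichsCos A B * ‖a‖ * ‖b‖ := by
  rcases eq_or_ne a 0 with rfl | ha0
  · simp
  rcases eq_or_ne b 0 with rfl | hb0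
  · simp
  have hna : (0:ℝ) < ‖a‖ := norm_pos_iff.mpr ha0
  have hnb : (0:ℝ) < ‖b‖ := norm_pos_iff.mpr hb0
  have hmem : |⟪(‖a‖⁻¹ • a : H), (‖b‖⁻¹ • b : H)⟫| ∈ {r : ℝ | ∃ a ∈ A ⊓ (A ⊓ B)ᗮ, ∃ b ∈ B ⊓ (A ⊓ B)ᗮ,
      ‖a‖ = 1 ∧ ‖b‖ = 1 ∧ r = |⟪a, b⟫|} := by
    refine ⟨‖a‖⁻¹ • a, ?_, ‖b‖⁻¹ • b, ?_, ?_, ?_, rfl⟩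
    · exact Submodule.smul_mem _ _ ha
    · exact Submodule.smul_mem _ _ hb
    · rw [norm_smul]; simp [hna.ne']
    · rw [norm_smul]; simp [hnb.ne']
  have hle := le_csSup (fcSet_bdd A B) hmem
  have : |⟪(‖a‖⁻¹ • a : H), (‖b‖⁻¹ • b : H)⟫| = ‖a‖⁻¹ * ‖b‖⁻¹ * |⟪a, b⟫| := by
    rw [real_inner_smul_left, real_inner_smul_right, abs_mul, abs_mul,
      abs_of_nonneg (by positivity), abs_of_nonneg (by positivity)]
    ring
  rw [this] at hle
  unfold friedrichsCos
  have h0 : 0 ≤ sSup {r : ℝ | ∃ a ∈ A ⊓ (A ⊓ B)ᗮ, ∃ b ∈ B ⊓ (A ⊓ B)ᗮ,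
      ‖a‖ = 1 ∧ ‖b‖ = 1 ∧ r = |⟪a, b⟫|} := friedrichsCos_nonneg A B
  have := mul_le_mul_of_nonneg_left hle (le_of_lt (mul_pos hna hnb))
  calc |⟪a, b⟫| = ‖a‖ * ‖b‖ * (‖a‖⁻¹ * ‖b‖⁻¹ * |⟪a, b⟫|) := by
        field_simp
    _ ≤ ‖a‖ * ‖b‖ * sSup {r : ℝ | ∃ a ∈ A ⊓ (A ⊓ B)ᗮ, ∃ b ∈ B ⊓ (A ⊓ B)ᗮ,
        ‖a‖ = 1 ∧ ‖b‖ = 1 ∧ r = |⟪a, b⟫|} := this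
    _ = _ := by ring

lemma friedrichsCos_top : friedrichsCos A ⊤ = 0 := by
  unfold friedrichsCos
  convert Real.sSup_empty using 2
  rw [Set.eq_empty_iff_forall_notMem]
  rintro r ⟨a, hamem, -, -, ha, -, -⟩
  rw [inf_top_eq] at hamem
  have : a = 0 := by
    have h2 := (Submodule.mem_orthogonal A a).mp hamem.2 a hamem.1
    exact inner_self_eq_zero.mp h2
  rw [this] at ha; simp at ha


lemma nearest_point_unique {S : Set H} (hS : Convex ℝ S) {x p q : H}
    (hp : p ∈ S) (hq : q ∈ S) (hpm : ∀ y ∈ S, ‖x - p‖ ≤ ‖x - y‖)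
    (hqm : ∀ y ∈ S, ‖x - q‖ ≤ ‖x - y‖) : p = q := by
  have hmid : (1/2 : ℝ) • p + (1/2 : ℝ) • q ∈ S := by
    refine hS hp hq (by norm_num) (by norm_num) (by norm_num)
  set m := (1/2 : ℝ) • p + (1/2 : ℝ) • q with hm
  have h1 : ‖x - p‖ ≤ ‖x - m‖ := hpm _ hmid
  have h2 : ‖x - q‖ ≤ ‖x - m‖ := hqm _ hmid
  have key : ‖(x - p) + (x - q)‖^2 + ‖(x - p) - (x - q)‖^2
      = 2 * (‖x - p‖^2 + ‖x - q‖^2) := by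
    have := parallelogram_law_with_norm ℝ (x - p) (x - q)
    nlinarith [this]
  have e1 : (x - p) + (x - q) = (2:ℝ) • (x - m) := by
    rw [hm]; module
  have e2 : ‖(x - p) + (x - q)‖^2 = 4 * ‖x - m‖^2 := by
    rw [e1, norm_smul]; simp; ring
  have e3 : (x - p) - (x - q) = q - p := by abel
  have : ‖q - p‖^2 ≤ 0 := by
    rw [← e3]
    nlinarith [norm_nonneg (x - m), norm_nonneg (x - p), norm_nonneg (x - q)]
  have : ‖q - p‖ = 0 := by nlinarith [norm_nonneg (q - p)]
  have := norm_eq_zero.mp this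
  exact (sub_eq_zero.mp this).symm
lemma ssw_step (A K L : Submodule ℝ H) [HasOrthogonalProjection A] [HasOrthogonalProjection K]
    [HasOrthogonalProjection L] (hL : L = A ⊓ K)
    (R : H → H) (F : ℝ) (hF0 : 0 ≤ F) (hF1 : F ≤ 1)
    (hR : ∀ y, ‖R y - orthogonalProjection K y‖^2 ≤ (1 - F) * ‖y - orthogonalProjection K y‖^2)
    (hRK : ∀ y, (orthogonalProjection K (R y) : H) = orthogonalProjection K y)
    (hRsub : ∀ y u, u ∈ K → R (y - u) = R y - u) (z : H) :
    ‖R (orthogonalProjection A z) - orthogonalProjection L z‖^2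
      ≤ (1 - (1 - friedrichsCos A K ^ 2) * F) * ‖z - orthogonalProjection L z‖^2 := by
  subst hL
  set c := friedrichsCos A K with hc
  have hc0 : 0 ≤ c := friedrichsCos_nonneg A K
  have hc1 : c ≤ 1 := friedrichsCos_le_one A K
  set u : H := (orthogonalProjection (A ⊓ K) z : H) with hu
  have huAK : u ∈ A ⊓ K := (orthogonalProjection (A ⊓ K) z).2
  have huA : u ∈ A := huAK.1
  have huK : u ∈ K := huAK.2
  set w : H := z - u with hw
  -- rewrite goal : R (P_A z) - u = R (P_A w)
  have hPAz : (orthogonalProjection A z : H) = (orthogonalProjection A w : H) + u := by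
    rw [hw, map_sub]
    have : (orthogonalProjection A u : H) = u := orthogonalProjection_eq_self_iff.mpr huA
    push_cast
    rw [this]; abel
  set y : H := (orthogonalProjection A w : H) with hy
  have hRsplit : R ((orthogonalProjection A z : H)) = R y + u := by
    have := hRsub (y + u) u huK
    simp only [add_sub_cancel_right] at this
    rw [hPAz, this]; abel
  have hgoal_lhs : R ((orthogonalProjection A z : H)) - u = R y := by rw [hRsplit]; abel
  rw [hgoal_lhs]
  -- facts about w, y
  have hwproj : (orthogonalProjection (A ⊓ K) w : H) = 0 := by
    rw [hw, map_sub]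
    have : (orthogonalProjection (A ⊓ K) u : H) = u := orthogonalProjection_eq_self_iff.mpr huAK
    push_cast
    rw [this, hu]; abel
  have hyA : y ∈ A := (orthogonalProjection A w).2
  have hworth : w ∈ (A ⊓ K)ᗮ := by
    have := Submodule.orthogonalProjectionOnto_eq_zero_iff.mp (Subtype.ext hwproj : orthogonalProjection (A ⊓ K) w = 0)
    exact this
  have hyworth : y - w ∈ (A ⊓ K)ᗮ := by
    have h1 : w - y ∈ Aᗮ := sub_orthogonalProjection_mem_orthogonal w
    have h2 : Aᗮ ≤ (A ⊓ K)ᗮ := Submodule.orthogonal_le inf_le_left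
    have := h2 h1
    simpa using Submodule.neg_mem _ this
  have hyorth : y ∈ (A ⊓ K)ᗮ := by
    have := Submodule.add_mem _ hyworth hworth
    simpa using this
  have hynorm : ‖y‖^2 + ‖w - y‖^2 = ‖w‖^2 := by
    have hiz : ⟪w - y, y⟫ = 0 := orthogonalProjection_inner_eq_zero w y hyA
    have := norm_add_sq_eq_norm_sq_add_norm_sq_real hiz
    have he : (w - y) + y = w := by abel
    rw [he] at this
    linarith
  set v : H := (orthogonalProjection K y : H) with hv
  have hvK : v ∈ K := (orthogonalProjection K y).2
  have hyvorth : y - v ∈ Kᗮ := sub_orthogonalProjection_mem_orthogonal y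
  have hvsplit : ‖y - v‖^2 + ‖v‖^2 = ‖y‖^2 := by
    have hiz : ⟪y - v, v⟫ = 0 := orthogonalProjection_inner_eq_zero y v hvK
    have := norm_add_sq_eq_norm_sq_add_norm_sq_real hiz
    have he : (y - v) + v = y := by abel
    rw [he] at this
    linarith
  have hvorth : v ∈ (A ⊓ K)ᗮ := by
    have h2 : Kᗮ ≤ (A ⊓ K)ᗮ := Submodule.orthogonal_le inf_le_right
    have h3 : v - y ∈ (A ⊓ K)ᗮ := by
      have := h2 hyvorth
      simpa using Submodule.neg_mem _ this
    have := Submodule.add_mem _ h3 hyorth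
    simpa using this
  -- angle bound : ‖v‖² ≤ c² ‖y‖²
  have hangle : ‖v‖^2 ≤ c^2 * ‖y‖^2 := by
    have hin : ⟪y, v⟫ = ‖v‖^2 := by
      have h0 : ⟪y - v, v⟫ = 0 := orthogonalProjection_inner_eq_zero y v hvK
      have : ⟪y, v⟫ - ⟪v, v⟫ = 0 := by rw [← inner_sub_left]; exact h0
      rw [real_inner_self_eq_norm_sq] at this
      linarith
    have habs : |⟪y, v⟫| ≤ c * ‖y‖ * ‖v‖ :=
      abs_inner_le_friedrichsCos A K (Submodule.mem_inf.mpr ⟨hyA, hyorth⟩)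
        (Submodule.mem_inf.mpr ⟨hvK, hvorth⟩)
    have h1 : ‖v‖^2 ≤ c * ‖y‖ * ‖v‖ := by
      calc ‖v‖^2 = ⟪y, v⟫ := hin.symm
        _ ≤ |⟪y, v⟫| := le_abs_self _
        _ ≤ c * ‖y‖ * ‖v‖ := habs
    rcases eq_or_ne v 0 with hv0 | hv0
    · rw [hv0]; simp; positivity
    · have hvpos : (0:ℝ) < ‖v‖ := norm_pos_iff.mpr hv0
      have h2 : ‖v‖ ≤ c * ‖y‖ := by
        nlinarith [h1, hvpos, norm_nonneg y]
      nlinarith [norm_nonneg v, norm_nonneg y]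
  -- K-split of ‖R y‖²
  have hRKv : (orthogonalProjection K (R y) : H) = v := hRK y
  have hRyv : R y - v ∈ Kᗮ := by
    have := sub_orthogonalProjection_mem_orthogonal (K := K) (R y)
    rwa [hRKv] at this
  have hRsplit2 : ‖R y - v‖^2 + ‖v‖^2 = ‖R y‖^2 := by
    have hiz : ⟪R y - v, v⟫ = 0 := by
      rw [real_inner_comm]; exact hRyv v hvK
    have := norm_add_sq_eq_norm_sq_add_norm_sq_real hiz
    have he : (R y - v) + v = R y := by abel
    rw [he] at this
    linarith
  have hRbound : ‖R y - v‖^2 ≤ (1 - F) * ‖y - v‖^2 := hR y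
  -- combine
  have hcoef : (0:ℝ) ≤ 1 - (1 - c^2) * F := by nlinarith
  have hyw : ‖y‖^2 ≤ ‖w‖^2 := by nlinarith [sq_nonneg ‖w - y‖, hynorm]
  calc ‖R y‖^2 = ‖R y - v‖^2 + ‖v‖^2 := hRsplit2.symm
    _ ≤ (1 - F) * ‖y - v‖^2 + ‖v‖^2 := by linarith
    _ = (1 - F) * ‖y‖^2 + F * ‖v‖^2 := by nlinarith [hvsplit]
    _ ≤ (1 - F) * ‖y‖^2 + F * (c^2 * ‖y‖^2) := by nlinarith
    _ = (1 - (1 - c^2) * F) * ‖y‖^2 := by ring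
    _ ≤ (1 - (1 - c^2) * F) * ‖w‖^2 := by nlinarith

variable (n : ℕ) (V : ℕ → Submodule ℝ H)

/-- Intersection of the subspaces with indices in `[i, n]`. -/
noncomputable def Bsub (i : ℕ) : Submodule ℝ H := ⨅ j ∈ Finset.Icc i n, V j

lemma Bsub_top : Bsub n V (n + 1) = ⊤ := by
  unfold Bsub
  rw [Finset.Icc_eq_empty (by omega)]
  simp

lemma Bsub_le_V {i : ℕ} (hi : i ≤ n) : Bsub n V i ≤ V i :=
  iInf₂_le i (Finset.mem_Icc.mpr ⟨le_refl _, hi⟩)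

lemma Bsub_mono {i i' : ℕ} (h : i ≤ i') : Bsub n V i ≤ Bsub n V i' := by
  refine le_iInf₂ fun j hj => iInf₂_le j ?_
  rw [Finset.mem_Icc] at hj ⊢
  omega

lemma Bsub_split {i : ℕ} (h1 : 1 ≤ i) (h2 : i ≤ n) :
    Bsub n V i = V i ⊓ Bsub n V (i + 1) := by
  unfold Bsub
  have : Finset.Icc i n = insert i (Finset.Icc (i + 1) n) := by
    ext j; simp only [Finset.mem_Icc, Finset.mem_insert]; omega
  rw [this, Finset.iInf_insert]

variable [∀ j, HasOrthogonalProjection (V j)] [∀ i, HasOrthogonalProjection (Bsub n V i)]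

/-- `Dcomp k = P (V n) ∘ ⋯ ∘ P (V (n-k+1))`. -/
noncomputable def Dcomp : ℕ → H → H := fun k =>
  Nat.rec (motive := fun _ => H → H) id
    (fun k Dk => fun z => Dk ((orthogonalProjection (V (n - k)) z : H))) k

lemma Dcomp_zero : Dcomp n V 0 = id := rfl

lemma Dcomp_succ (k : ℕ) :
    Dcomp n V (k + 1) = fun z => Dcomp n V k ((orthogonalProjection (V (n - k)) z : H)) := rfl

lemma Dcomp_sub {k : ℕ} (hk : k ≤ n) (y u : H) (hu : u ∈ Bsub n V (n - k + 1)) :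
    Dcomp n V k (y - u) = Dcomp n V k y - u := by
  induction k generalizing y with
  | zero => rfl
  | succ k ih =>
    have hidx : n - (k + 1) + 1 = n - k := by omega
    rw [hidx] at hu
    have huV : u ∈ V (n - k) := Bsub_le_V n V (by omega) hu
    have huB : u ∈ Bsub n V (n - k + 1) := Bsub_mono n V (by omega) hu
    have hmap : ((orthogonalProjection (V (n - k)) (y - u) : H))
        = (orthogonalProjection (V (n - k)) y : H) - u := by
      rw [map_sub]
      push_cast
      rw [orthogonalProjection_eq_self_iff.mpr huV]
    show Dcomp n V k ((orthogonalProjection (V (n - k)) (y - u) : H))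
        = Dcomp n V k ((orthogonalProjection (V (n - k)) y : H)) - u
    rw [hmap, ih (by omega) _ huB]

lemma Dcomp_proj {k : ℕ} (hk : k ≤ n) (L : Submodule ℝ H) [HasOrthogonalProjection L]
    (hL : L ≤ Bsub n V (n - k + 1)) (y : H) :
    (orthogonalProjection L (Dcomp n V k y) : H) = orthogonalProjection L y := by
  induction k generalizing y with
  | zero => rfl
  | succ k ih =>
    have hidx : n - (k + 1) + 1 = n - k := by omega
    rw [hidx] at hL
    have hL' : L ≤ Bsub n V (n - k + 1) := le_trans hL (Bsub_mono n V (by omega))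
    rw [Dcomp_succ]
    rw [ih (by omega) hL']
    -- now : π_L (π_{V (n-k)} y) = π_L y
    have hdiff : (orthogonalProjection (V (n - k)) y : H) - y ∈ Lᗮ := by
      have h1 : y - (orthogonalProjection (V (n - k)) y : H) ∈ (V (n - k))ᗮ :=
        sub_orthogonalProjection_mem_orthogonal y
      have h2 : (V (n - k))ᗮ ≤ Lᗮ :=
        Submodule.orthogonal_le (le_trans hL (Bsub_le_V n V (by omega)))
      simpa using Submodule.neg_mem _ (h2 h1)
    have := Submodule.orthogonalProjectionOnto_apply_of_mem_orthogonal hdiff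
    calc (orthogonalProjection L ((orthogonalProjection (V (n - k)) y : H)) : H)
        = (orthogonalProjection L (((orthogonalProjection (V (n - k)) y : H) - y) + y) : H) := by
          rw [sub_add_cancel]
      _ = (orthogonalProjection L y : H) := by
          rw [map_add]
          push_cast
          rw [this]
          simp

lemma ssw_main {k : ℕ} (hk : k ≤ n) (z : H) :
    ‖Dcomp n V k z - orthogonalProjection (Bsub n V (n - k + 1)) z‖^2
      ≤ (1 - ∏ j ∈ Finset.Icc (n - k + 1) n, (1 - friedrichsCos (V j) (Bsub n V (j + 1)) ^ 2))
        * ‖z - orthogonalProjection (Bsub n V (n - k + 1)) z‖^2 := by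
  have hfac0 : ∀ j, 0 ≤ 1 - friedrichsCos (V j) (Bsub n V (j + 1)) ^ 2 := by
    intro j
    have h1 := friedrichsCos_nonneg (V j) (Bsub n V (j + 1))
    have h2 := friedrichsCos_le_one (V j) (Bsub n V (j + 1))
    nlinarith
  have hfac1 : ∀ j, 1 - friedrichsCos (V j) (Bsub n V (j + 1)) ^ 2 ≤ 1 := by
    intro j
    have h1 := friedrichsCos_nonneg (V j) (Bsub n V (j + 1))
    nlinarith
  induction k generalizing z with
  | zero =>
    have hπ : (orthogonalProjection (Bsub n V (n + 1)) z : H) = z := by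
      apply orthogonalProjection_eq_self_iff.mpr
      rw [Bsub_top n V]; trivial
    rw [Nat.sub_zero, Finset.Icc_eq_empty (by omega), Finset.prod_empty, hπ]
    simp [Dcomp_zero]
  | succ k ih =>
    set i := n - k with hi
    have hik : 1 ≤ i := by omega
    have hin : i ≤ n := by omega
    have hidx : n - (k + 1) + 1 = i := by omega
    rw [hidx]
    have hF0 : (0:ℝ) ≤ ∏ j ∈ Finset.Icc (i + 1) n, (1 - friedrichsCos (V j) (Bsub n V (j + 1)) ^ 2) :=
      Finset.prod_nonneg fun j _ => hfac0 j
    have hF1 : (∏ j ∈ Finset.Icc (i + 1) n, (1 - friedrichsCos (V j) (Bsub n V (j + 1)) ^ 2)) ≤ 1 :=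
      Finset.prod_le_one (fun j _ => hfac0 j) (fun j _ => hfac1 j)
    have hidx2 : n - k + 1 = i + 1 := by omega
    have step := ssw_step (V i) (Bsub n V (i + 1)) (Bsub n V i) (Bsub_split n V hik hin)
      (Dcomp n V k)
      (∏ j ∈ Finset.Icc (i + 1) n, (1 - friedrichsCos (V j) (Bsub n V (j + 1)) ^ 2))
      hF0 hF1
      (fun y => by
        have := ih (by omega) y
        rwa [hidx2] at this)
      (fun y => by
        have := Dcomp_proj n V (k := k) (by omega) (Bsub n V (i + 1)) (by rw [hidx2]) y
        exact this)
      (fun y u hu => Dcomp_sub n V (by omega) y u (by rwa [hidx2]))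
      z
    have hprod : (∏ j ∈ Finset.Icc i n, (1 - friedrichsCos (V j) (Bsub n V (j + 1)) ^ 2))
        = (1 - friedrichsCos (V i) (Bsub n V (i + 1)) ^ 2)
          * ∏ j ∈ Finset.Icc (i + 1) n, (1 - friedrichsCos (V j) (Bsub n V (j + 1)) ^ 2) := by
      have hins : Finset.Icc i n = insert i (Finset.Icc (i + 1) n) := by
        ext j; simp only [Finset.mem_Icc, Finset.mem_insert]; omega
      rw [hins, Finset.prod_insert (by simp [Finset.mem_Icc])]
    rw [hprod]
    exact step
/-- `Gcomp i = P (V i) ∘ ⋯ ∘ P (V 1)`. -/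

noncomputable def Gcomp : ℕ → H → H := fun i =>
  Nat.rec (motive := fun _ => H → H) id
    (fun i Gi => fun z => (orthogonalProjection (V (i + 1)) (Gi z) : H)) i

omit [∀ i, HasOrthogonalProjection (Bsub n V i)] in
lemma Gcomp_succ (i : ℕ) :
    Gcomp V (i + 1) = fun z => (orthogonalProjection (V (i + 1)) (Gcomp V i z) : H) := rfl

lemma Dcomp_Gcomp {k : ℕ} (hk : k ≤ n) (z : H) :
    Dcomp n V k (Gcomp V (n - k) z) = Gcomp V n z := by
  induction k with
  | zero => simp [Dcomp, Nat.sub_zero]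
  | succ k ih =>
    have h1 : n - (k + 1) + 1 = n - k := by omega
    show Dcomp n V k ((orthogonalProjection (V (n - k)) (Gcomp V (n - (k+1)) z) : H))
        = Gcomp V n z
    have h2 : Gcomp V (n - k) z
        = ((orthogonalProjection (V (n - k)) (Gcomp V (n - (k+1)) z) : H)) := by
      conv_lhs => rw [← h1]
      rw [Gcomp_succ, h1]
    rw [← h2, ih (by omega)]

omit [∀ i, HasOrthogonalProjection (Bsub n V i)] in
lemma orthProj_min (L : Submodule ℝ H) [HasOrthogonalProjection L] (z v : H) (hv : v ∈ L) :
    ‖z - orthogonalProjection L z‖ ≤ ‖z - v‖ := by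
  have hmem : (orthogonalProjection L z : H) - v ∈ L :=
    Submodule.sub_mem _ (orthogonalProjection L z).2 hv
  have hiz : ⟪z - orthogonalProjection L z, (orthogonalProjection L z : H) - v⟫ = 0 :=
    orthogonalProjection_inner_eq_zero z _ hmem
  have key := norm_add_sq_eq_norm_sq_add_norm_sq_real hiz
  have he : (z - (orthogonalProjection L z : H)) + ((orthogonalProjection L z : H) - v)
      = z - v := by abel
  rw [he] at key
  have h1 : ‖z - (orthogonalProjection L z : H)‖^2 ≤ ‖z - v‖^2 := by
    nlinarith [sq_nonneg ‖(orthogonalProjection L z : H) - v‖]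
  have := Real.sqrt_le_sqrt h1
  rwa [Real.sqrt_sq (norm_nonneg _), Real.sqrt_sq (norm_nonneg _)] at this
end Aux

set_option maxHeartbeats 1000000 in
/-- Gearhart–Koshy acceleration for affine subspaces: there exists a sequence
`(fₖ) ⊆ [0,1]` with `‖xₖ − P_M x₀‖ ≤ (∏_{i=1}^k fᵢ) cᵏ ‖x₀ − P_M x₀‖`. -/
theorem gearhart_koshy_affine_rate
    {H : Type*} [NormedAddCommGroup H] [InnerProductSpace ℝ H] [CompleteSpace H]
    (n : ℕ) (hn : 1 ≤ n)
    (M : ℕ → AffineSubspace ℝ H)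
    (hclosed : ∀ i ∈ Finset.Icc 1 n, IsClosed (M i : Set H))
    (hne : (⋂ i ∈ Finset.Icc 1 n, (M i : Set H)).Nonempty)
    (P : ℕ → H → H)
    (hP : ∀ i ∈ Finset.Icc 1 n, IsProjOn (M i : Set H) (P i))
    (PM : H → H)
    (hPM : IsProjOn (⋂ i ∈ Finset.Icc 1 n, (M i : Set H)) PM)
    (Q : ℕ → H → H)
    (hQ0 : Q 0 = id)
    (hQ : ∀ i, 1 ≤ i → i ≤ n → Q i = P i ∘ Q (i - 1))
    (c : ℕ → ℝ)
    (hc : ∀ i ∈ Finset.Icc 1 (n - 1),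
      c i = friedrichsCos ((M i).direction) (⨅ j ∈ Finset.Icc (i + 1) n, (M j).direction))
    (C : ℝ)
    (hC : C = Real.sqrt (1 - ∏ i ∈ Finset.Icc 1 (n - 1), (1 - c i ^ 2)))
    (x0 : H) (x : ℕ → H) (t : ℕ → ℝ)
    (hx0 : x 0 = x0)
    (ht : ∀ k, (Q n (x k) ≠ x k →
        t k = 1 / 2 + (∑ i ∈ Finset.Icc 1 n, ‖Q (i - 1) (x k) - Q i (x k)‖ ^ 2)
          / (2 * ‖x k - Q n (x k)‖ ^ 2)) ∧
      (Q n (x k) = x k → t k = 1))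
    (hx : ∀ k, x (k + 1) = x k + t k • (Q n (x k) - x k)) :
    ∃ f : ℕ → ℝ, (∀ k, f k ∈ Set.Icc (0 : ℝ) 1) ∧
      ∀ k, ‖x k - PM x0‖ ≤ (∏ i ∈ Finset.Icc 1 k, f i) * C ^ k * ‖x0 - PM x0‖ := by
  classical
  obtain ⟨m, hm⟩ := hne
  have hmI : ∀ i ∈ Finset.Icc 1 n, m ∈ M i := by
    intro i hi
    exact Set.mem_iInter₂.mp hm i hi
  -- the parallel subspaces (⊤ outside the index range, to keep everything closed)
  set V : ℕ → Submodule ℝ H := fun j =>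
    if j ∈ Finset.Icc 1 n then (M j).direction else ⊤ with hVdef
  have hVdir : ∀ j ∈ Finset.Icc 1 n, V j = (M j).direction := by
    intro j hj; simp only [hVdef, hj, if_true]
  have hmemV : ∀ j ∈ Finset.Icc 1 n, ∀ w : H, w ∈ M j ↔ w - m ∈ V j := by
    intro j hj w
    rw [hVdir j hj]
    constructor
    · intro hw
      have := AffineSubspace.vsub_mem_direction hw (hmI j hj)
      simpa [vsub_eq_sub] using this
    · intro hw
      have := AffineSubspace.vadd_mem_of_mem_direction hw (hmI j hj)
      simpa [vadd_eq_add] using this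
  have hVclosed : ∀ j, IsClosed ((V j : Set H)) := by
    intro j
    by_cases hj : j ∈ Finset.Icc 1 n
    · have : (V j : Set H) = (fun w => w + m) ⁻¹' (M j : Set H) := by
        ext v
        simp only [Set.mem_preimage, SetLike.mem_coe]
        rw [hmemV j hj (v + m)]
        simp
      rw [this]
      exact (hclosed j hj).preimage (continuous_id.add continuous_const)
    · have : (V j : Set H) = Set.univ := by
        simp only [hVdef, hj, if_false, Submodule.top_coe]
      rw [this]; exact isClosed_univ
  haveI hOPV : ∀ j, HasOrthogonalProjection (V j) := by
    intro j
    have : CompleteSpace (V j) := (hVclosed j).completeSpace_coe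
    infer_instance
  have hBclosed : ∀ i, IsClosed ((Bsub n V i : Submodule ℝ H) : Set H) := by
    intro i
    have hset : ((Bsub n V i : Submodule ℝ H) : Set H)
        = ⋂ (j : ℕ), ⋂ (_ : j ∈ Finset.Icc i n), (V j : Set H) := by
      ext w
      simp only [SetLike.mem_coe, Set.mem_iInter, Bsub, Submodule.mem_iInf]
    rw [hset]
    exact isClosed_iInter fun j => isClosed_iInter fun _ => hVclosed j
  haveI hOPB : ∀ i, HasOrthogonalProjection (Bsub n V i) := by
    intro i
    have : CompleteSpace (Bsub n V i) := (hBclosed i).completeSpace_coe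
    infer_instance
  -- projections expressed via orthogonal projections onto the parallel subspaces
  have hPeq : ∀ i ∈ Finset.Icc 1 n, ∀ w : H,
      P i w = m + (orthogonalProjection (V i) (w - m) : H) := by
    intro i hi w
    refine nearest_point_unique (AffineSubspace.convex (M i)) ((hP i hi w).1)
      ?_ ((hP i hi w).2) ?_
    · have : (m + (orthogonalProjection (V i) (w - m) : H)) - m ∈ V i := by
        simpa using (orthogonalProjection (V i) (w - m)).2
      exact (hmemV i hi _).mpr this
    · intro y hy
      have h1 : w - (m + (orthogonalProjection (V i) (w - m) : H))
          = (w - m) - (orthogonalProjection (V i) (w - m) : H) := by abel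
      have h2 : w - y = (w - m) - (y - m) := by abel
      rw [h1, h2]
      exact orthProj_min (V i) (w - m) (y - m) ((hmemV i hi y).mp hy)
  have hmemW : ∀ w : H, w ∈ (⋂ i ∈ Finset.Icc 1 n, (M i : Set H)) ↔ w - m ∈ Bsub n V 1 := by
    intro w
    have h1 : (w - m ∈ Bsub n V 1) ↔ ∀ j ∈ Finset.Icc 1 n, w - m ∈ V j := by
      simp [Bsub, Submodule.mem_iInf]
    rw [h1, Set.mem_iInter₂]
    constructor
    · intro h j hj; exact (hmemV j hj w).mp (h j hj)
    · intro h j hj; exact (hmemV j hj w).mpr (h j hj)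
  have hPMeq : PM x0 = m + (orthogonalProjection (Bsub n V 1) (x0 - m) : H) := by
    have hconv : Convex ℝ (⋂ i ∈ Finset.Icc 1 n, (M i : Set H)) :=
      convex_iInter fun i => convex_iInter fun _ => (M i).convex
    refine nearest_point_unique hconv ((hPM x0).1) ?_ ((hPM x0).2) ?_
    · exact (hmemW _).mpr (by simpa using (orthogonalProjection (Bsub n V 1) (x0 - m)).2)
    · intro y hy
      have h1 : x0 - (m + (orthogonalProjection (Bsub n V 1) (x0 - m) : H))
          = (x0 - m) - (orthogonalProjection (Bsub n V 1) (x0 - m) : H) := by abel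
      have h2 : x0 - y = (x0 - m) - (y - m) := by abel
      rw [h1, h2]
      exact orthProj_min (Bsub n V 1) (x0 - m) (y - m) ((hmemW y).mp hy)
  have hQG : ∀ i, i ≤ n → ∀ w : H, Q i w = m + Gcomp V i (w - m) := by
    intro i
    induction i with
    | zero => intro _ w; rw [hQ0]; show w = m + (w - m); abel
    | succ i ih =>
      intro hi w
      rw [hQ (i+1) (by omega) hi]
      show P (i+1) (Q ((i+1) - 1) w) = _
      rw [show (i+1) - 1 = i from rfl, ih (by omega) w,
        hPeq (i+1) (Finset.mem_Icc.mpr ⟨by omega, hi⟩) _]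
      rw [show (m + Gcomp V i (w - m)) - m = Gcomp V i (w - m) by abel]
      rfl
  -- identification of the contraction constant
  have hBeq : ∀ i, 1 ≤ i → Bsub n V i = ⨅ j ∈ Finset.Icc i n, (M j).direction := by
    intro i hi
    refine iInf_congr fun j => iInf_congr fun hj => ?_
    have hj' := Finset.mem_Icc.mp hj
    exact hVdir j (Finset.mem_Icc.mpr ⟨by omega, hj'.2⟩)
  have hfaceq : ∀ i ∈ Finset.Icc 1 (n-1),
      1 - friedrichsCos (V i) (Bsub n V (i+1)) ^ 2 = 1 - c i ^ 2 := by
    intro i hi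
    have hi' := Finset.mem_Icc.mp hi
    rw [hc i hi, hVdir i (Finset.mem_Icc.mpr ⟨hi'.1, by omega⟩), hBeq (i+1) (by omega)]
  have hfacn : 1 - friedrichsCos (V n) (Bsub n V (n+1)) ^ 2 = 1 := by
    rw [Bsub_top, friedrichsCos_top]; norm_num
  have hprodeq : (∏ j ∈ Finset.Icc 1 n, (1 - friedrichsCos (V j) (Bsub n V (j+1)) ^ 2))
      = ∏ i ∈ Finset.Icc 1 (n-1), (1 - c i ^ 2) := by
    have h1 := Finset.prod_Icc_succ_top (a := 1) (b := n - 1)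
      (f := fun j => 1 - friedrichsCos (V j) (Bsub n V (j+1)) ^ 2) (by omega)
    rw [show n - 1 + 1 = n by omega] at h1
    rw [h1, hfacn, mul_one]
    exact Finset.prod_congr rfl hfaceq
  have hfac0 : ∀ j, (0:ℝ) ≤ 1 - friedrichsCos (V j) (Bsub n V (j + 1)) ^ 2 := by
    intro j
    have h1 := friedrichsCos_nonneg (V j) (Bsub n V (j + 1))
    have h2 := friedrichsCos_le_one (V j) (Bsub n V (j + 1))
    nlinarith
  have hfac1 : ∀ j, 1 - friedrichsCos (V j) (Bsub n V (j + 1)) ^ 2 ≤ 1 := by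
    intro j
    have h1 := friedrichsCos_nonneg (V j) (Bsub n V (j + 1))
    nlinarith
  have hF0 : (0:ℝ) ≤ ∏ j ∈ Finset.Icc 1 n, (1 - friedrichsCos (V j) (Bsub n V (j+1)) ^ 2) :=
    Finset.prod_nonneg fun j _ => hfac0 j
  have hF1 : (∏ j ∈ Finset.Icc 1 n, (1 - friedrichsCos (V j) (Bsub n V (j+1)) ^ 2)) ≤ 1 :=
    Finset.prod_le_one (fun j _ => hfac0 j) (fun j _ => hfac1 j)
  have hC2 : C ^ 2 = 1 - ∏ j ∈ Finset.Icc 1 n, (1 - friedrichsCos (V j) (Bsub n V (j+1)) ^ 2) := by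
    rw [hC, ← hprodeq, Real.sq_sqrt (by linarith)]
  have hC0 : 0 ≤ C := by rw [hC]; exact Real.sqrt_nonneg _
  -- the composite map and its contraction property
  have hDG : ∀ z : H, Dcomp n V n z = Gcomp V n z := by
    intro z
    have h := Dcomp_Gcomp n V (k := n) le_rfl z
    rwa [show n - n = 0 by omega] at h
  have hcontr : ∀ z : H, ‖Gcomp V n z - (orthogonalProjection (Bsub n V 1) z : H)‖
      ≤ C * ‖z - (orthogonalProjection (Bsub n V 1) z : H)‖ := by
    intro z
    have h1 := ssw_main n V (k := n) le_rfl z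
    rw [show n - n + 1 = 1 by omega] at h1
    rw [hDG z] at h1
    have h3 : ‖Gcomp V n z - (orthogonalProjection (Bsub n V 1) z : H)‖^2
        ≤ (C * ‖z - (orthogonalProjection (Bsub n V 1) z : H)‖)^2 := by
      rw [mul_pow, hC2]; exact h1
    have := Real.sqrt_le_sqrt h3
    rwa [Real.sqrt_sq (norm_nonneg _), Real.sqrt_sq (by positivity)] at this
  -- the projection of the iterates onto the intersection is constant
  have hprojG : ∀ z : H, (orthogonalProjection (Bsub n V 1) (Gcomp V n z) : H)
      = (orthogonalProjection (Bsub n V 1) z : H) := by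
    intro z
    rw [← hDG z]
    exact Dcomp_proj n V le_rfl (Bsub n V 1) (by rw [show n - n + 1 = 1 by omega]) z
  have hfix : ∀ k, (orthogonalProjection (Bsub n V 1) (x k - m) : H)
      = (orthogonalProjection (Bsub n V 1) (x0 - m) : H) := by
    intro k
    induction k with
    | zero => rw [hx0]
    | succ k ih =>
      have hxe : x (k+1) - m = (x k - m) + t k • (Gcomp V n (x k - m) - (x k - m)) := by
        rw [hx k, hQG n le_rfl (x k)]
        module
      have hzero : (orthogonalProjection (Bsub n V 1)
          (Gcomp V n (x k - m) - (x k - m)) : H) = 0 := by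
        rw [map_sub]
        push_cast
        rw [hprojG (x k - m)]
        simp
      rw [hxe, map_add, map_smul]
      push_cast
      rw [hzero]
      simpa using ih
  have hpm' : PM x0 - m = (orthogonalProjection (Bsub n V 1) (x0 - m) : H) := by
    rw [hPMeq]; abel
  have hxkp : ∀ k, x k - PM x0 = (x k - m) - (orthogonalProjection (Bsub n V 1) (x k - m) : H) := by
    intro k; rw [hfix k, ← hpm']; abel
  have hqkp : ∀ k, Q n (x k) - PM x0
      = Gcomp V n (x k - m) - (orthogonalProjection (Bsub n V 1) (x k - m) : H) := by
    intro k; rw [hQG n le_rfl, hfix k, ← hpm']; abel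
  have hcontr2 : ∀ k, ‖Q n (x k) - PM x0‖ ≤ C * ‖x k - PM x0‖ := by
    intro k; rw [hqkp k, hxkp k]; exact hcontr (x k - m)
  -- line search step does not increase the distance
  have hpMi : ∀ i ∈ Finset.Icc 1 n, PM x0 ∈ M i := fun i hi =>
    Set.mem_iInter₂.mp (hPM x0).1 i hi
  have hQmem : ∀ i ∈ Finset.Icc 1 n, ∀ k, Q i (x k) ∈ M i := by
    intro i hi k
    have hi' := Finset.mem_Icc.mp hi
    rw [hQ i hi'.1 hi'.2]
    exact (hP i hi _).1
  have hstepid : ∀ k, ∀ i ∈ Finset.Icc 1 n,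
      ‖Q (i-1) (x k) - PM x0‖^2
        = ‖Q (i-1) (x k) - Q i (x k)‖^2 + ‖Q i (x k) - PM x0‖^2 := by
    intro k i hi
    have hi' := Finset.mem_Icc.mp hi
    have h1 : Q (i-1) (x k) - Q i (x k) ∈ (V i)ᗮ := by
      rw [hQ i hi'.1 hi'.2]
      show Q (i-1) (x k) - P i (Q (i-1) (x k)) ∈ (V i)ᗮ
      rw [hPeq i hi (Q (i-1) (x k))]
      rw [show Q (i-1) (x k) - (m + (orthogonalProjection (V i) (Q (i-1) (x k) - m) : H))
          = (Q (i-1) (x k) - m) - (orthogonalProjection (V i) (Q (i-1) (x k) - m) : H) by abel]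
      exact sub_orthogonalProjection_mem_orthogonal _
    have h2 : Q i (x k) - PM x0 ∈ V i := by
      have ha : Q i (x k) - m ∈ V i := (hmemV i hi _).mp (hQmem i hi k)
      have hb : PM x0 - m ∈ V i := (hmemV i hi _).mp (hpMi i hi)
      have := Submodule.sub_mem _ ha hb
      simpa using this
    have hiz : ⟪Q (i-1) (x k) - Q i (x k), Q i (x k) - PM x0⟫ = 0 :=
      (Submodule.mem_orthogonal' _ _).mp h1 _ h2
    have key := norm_add_sq_eq_norm_sq_add_norm_sq_real hiz
    rw [show (Q (i-1) (x k) - Q i (x k)) + (Q i (x k) - PM x0)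
        = Q (i-1) (x k) - PM x0 by abel] at key
    linarith
  have htel : ∀ k, ‖x k - PM x0‖^2 - ‖Q n (x k) - PM x0‖^2
      = ∑ i ∈ Finset.Icc 1 n, ‖Q (i-1) (x k) - Q i (x k)‖^2 := by
    intro k
    have gen : ∀ N, N ≤ n → ‖Q 0 (x k) - PM x0‖^2 - ‖Q N (x k) - PM x0‖^2
        = ∑ i ∈ Finset.Icc 1 N, ‖Q (i-1) (x k) - Q i (x k)‖^2 := by
      intro N
      induction N with
      | zero => intro _; simp
      | succ N ihN =>
        intro hN
        rw [Finset.sum_Icc_succ_top (by omega), ← ihN (by omega)]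
        have hkey := hstepid k (N+1) (Finset.mem_Icc.mpr ⟨by omega, hN⟩)
        rw [show (N+1) - 1 = N from rfl] at hkey
        simp only [Nat.add_sub_cancel]
        linarith
    have h0 : Q 0 (x k) = x k := by rw [hQ0]; rfl
    have hgen := gen n le_rfl
    rwa [h0] at hgen
  have hls : ∀ k, ‖x (k+1) - PM x0‖ ≤ ‖Q n (x k) - PM x0‖ := by
    intro k
    by_cases hq : Q n (x k) = x k
    · rw [hx k, hq, (ht k).2 hq]
      simp
    · have ht1 : t k = 1/2 + (∑ i ∈ Finset.Icc 1 n, ‖Q (i-1) (x k) - Q i (x k)‖^2)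
          / (2 * ‖x k - Q n (x k)‖^2) := (ht k).1 hq
      have hd0 : x k - Q n (x k) ≠ 0 := sub_ne_zero.mpr (Ne.symm hq)
      have hdn : (0:ℝ) < ‖x k - Q n (x k)‖^2 := pow_pos (norm_pos_iff.mpr hd0) 2
      have hinner : 2 * ⟪x k - PM x0, x k - Q n (x k)⟫
          = ‖x k - PM x0‖^2 + ‖x k - Q n (x k)‖^2 - ‖Q n (x k) - PM x0‖^2 := by
        have hsub : (x k - PM x0) - (x k - Q n (x k)) = Q n (x k) - PM x0 := by abel
        have hns := norm_sub_sq_real (x k - PM x0) (x k - Q n (x k))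
        rw [hsub] at hns
        linarith
      have htk : ⟪x k - PM x0, x k - Q n (x k)⟫ = t k * ‖x k - Q n (x k)‖^2 := by
        rw [ht1]
        have h5 : (1/2 + (∑ i ∈ Finset.Icc 1 n, ‖Q (i-1) (x k) - Q i (x k)‖^2)
            / (2 * ‖x k - Q n (x k)‖^2)) * ‖x k - Q n (x k)‖^2
            = ‖x k - Q n (x k)‖^2 / 2
              + (∑ i ∈ Finset.Icc 1 n, ‖Q (i-1) (x k) - Q i (x k)‖^2) / 2 := by
          field_simp
        rw [h5]
        have h6 := htel k
        linarith
      have hx1 : x (k+1) - PM x0 = (x k - PM x0) - t k • (x k - Q n (x k)) := by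
        rw [hx k]; module
      have e1 : ‖x (k+1) - PM x0‖^2 = ‖x k - PM x0‖^2
          - 2 * (t k * ⟪x k - PM x0, x k - Q n (x k)⟫) + t k^2 * ‖x k - Q n (x k)‖^2 := by
        rw [hx1, norm_sub_sq_real, real_inner_smul_right, norm_smul]
        simp only [Real.norm_eq_abs, mul_pow, sq_abs]
        try ring
      have e2 : ‖Q n (x k) - PM x0‖^2 = ‖x k - PM x0‖^2
          - 2 * ⟪x k - PM x0, x k - Q n (x k)⟫ + ‖x k - Q n (x k)‖^2 := by
        have hsub : Q n (x k) - PM x0 = (x k - PM x0) - (x k - Q n (x k)) := by abel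
        rw [hsub, norm_sub_sq_real]
      have hfin : ‖x (k+1) - PM x0‖^2 ≤ ‖Q n (x k) - PM x0‖^2 := by
        nlinarith [htk, e1, e2, mul_nonneg (sq_nonneg (t k - 1)) hdn.le]
      have := Real.sqrt_le_sqrt hfin
      rwa [Real.sqrt_sq (norm_nonneg _), Real.sqrt_sq (norm_nonneg _)] at this
  -- assemble
  have hstep : ∀ k, ‖x (k+1) - PM x0‖ ≤ C * ‖x k - PM x0‖ :=
    fun k => le_trans (hls k) (hcontr2 k)
  refine ⟨fun j => if j = 0 then 0 else if C * ‖x (j-1) - PM x0‖ = 0 then 0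
      else ‖x j - PM x0‖ / (C * ‖x (j-1) - PM x0‖), ?_, ?_⟩
  · intro j
    by_cases hj : j = 0
    · simp [hj]
    by_cases hz : C * ‖x (j-1) - PM x0‖ = 0
    · simp [hj, hz]
    · have hpos : 0 < C * ‖x (j-1) - PM x0‖ :=
        lt_of_le_of_ne (mul_nonneg hC0 (norm_nonneg _)) (Ne.symm hz)
      simp only [hj, hz, if_false]
      constructor
      · positivity
      · rw [div_le_one hpos]
        have := hstep (j-1)
        rwa [show j - 1 + 1 = j by omega] at this
  · intro k
    induction k with
    | zero => simp [hx0]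
    | succ k ih =>
      have hprodtop : (∏ i ∈ Finset.Icc 1 (k+1), (fun j => if j = 0 then (0:ℝ)
          else if C * ‖x (j-1) - PM x0‖ = 0 then 0
          else ‖x j - PM x0‖ / (C * ‖x (j-1) - PM x0‖)) i)
          = (∏ i ∈ Finset.Icc 1 k, (fun j => if j = 0 then (0:ℝ)
          else if C * ‖x (j-1) - PM x0‖ = 0 then 0
          else ‖x j - PM x0‖ / (C * ‖x (j-1) - PM x0‖)) i)
            * (if C * ‖x k - PM x0‖ = 0 then 0
              else ‖x (k+1) - PM x0‖ / (C * ‖x k - PM x0‖)) := by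
        rw [Finset.prod_Icc_succ_top (by omega)]
        simp
      rw [hprodtop]
      have hprod0 : (0:ℝ) ≤ ∏ i ∈ Finset.Icc 1 k, (fun j => if j = 0 then (0:ℝ)
          else if C * ‖x (j-1) - PM x0‖ = 0 then 0
          else ‖x j - PM x0‖ / (C * ‖x (j-1) - PM x0‖)) i := by
        refine Finset.prod_nonneg fun j _ => ?_
        by_cases hj : j = 0
        · simp [hj]
        by_cases hz : C * ‖x (j-1) - PM x0‖ = 0
        · simp [hj, hz]
        · have hpos : 0 < C * ‖x (j-1) - PM x0‖ :=
            lt_of_le_of_ne (mul_nonneg hC0 (norm_nonneg _)) (Ne.symm hz)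
          simp only [hj, hz, if_false]
          positivity
      by_cases hz : C * ‖x k - PM x0‖ = 0
      · have h1 : ‖x (k+1) - PM x0‖ = 0 := by
          have := hstep k
          rw [hz] at this
          exact le_antisymm this (norm_nonneg _)
        rw [h1, hz]
        simp
      · have hpos : 0 < C * ‖x k - PM x0‖ :=
          lt_of_le_of_ne (mul_nonneg hC0 (norm_nonneg _)) (Ne.symm hz)
        simp only [hz, if_false]
        have heq : ‖x (k+1) - PM x0‖
            = (‖x (k+1) - PM x0‖ / (C * ‖x k - PM x0‖)) * (C * ‖x k - PM x0‖) := by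
          exact (div_mul_cancel₀ _ hpos.ne').symm
        have hquot0 : 0 ≤ ‖x (k+1) - PM x0‖ / (C * ‖x k - PM x0‖) := by positivity
        calc ‖x (k+1) - PM x0‖
            = (‖x (k+1) - PM x0‖ / (C * ‖x k - PM x0‖)) * (C * ‖x k - PM x0‖) := heq
          _ ≤ (‖x (k+1) - PM x0‖ / (C * ‖x k - PM x0‖))
              * (C * ((∏ i ∈ Finset.Icc 1 k, (fun j => if j = 0 then (0:ℝ)
                else if C * ‖x (j-1) - PM x0‖ = 0 then 0
                else ‖x j - PM x0‖ / (C * ‖x (j-1) - PM x0‖)) i) * C ^ k * ‖x0 - PM x0‖)) := by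
              refine mul_le_mul_of_nonneg_left ?_ hquot0
              exact mul_le_mul_of_nonneg_left ih hC0
          _ = (∏ i ∈ Finset.Icc 1 k, (fun j => if j = 0 then (0:ℝ)
                else if C * ‖x (j-1) - PM x0‖ = 0 then 0
                else ‖x j - PM x0‖ / (C * ‖x (j-1) - PM x0‖)) i)
              * (‖x (k+1) - PM x0‖ / (C * ‖x k - PM x0‖)) * C ^ (k+1) * ‖x0 - PM x0‖ := by
              ring
end

section
/- Let M_1, ..., M_n be closed affine subspaces of a real Hilbert space H with M := ∩_{i=1}^n M_i nonempty. Let S := P_{M_1} P_{M_2} ⋯ P_{M_{n−1}} P_{M_n} P_{M_{n−1}} ⋯ P_{M_1}, and define S_0 := I, S_i := P_{M_i} ⋯ P_{M_1} for 1 ≤ i ≤ n, and S_i := P_{M_{2n−i}} ⋯ P_{M_{n−1}} P_{M_n} S_n for n+1 ≤ i ≤ 2n−1 (so S_{2n−1} = S). Given x_0 ∈ H, set z_0 := S(x_0) and z_{k+1} := z_k + s_k (S(z_k) − z_k), where s_k := 1/2 + (Σ_{i=1}^{2n−1} ‖S_{i−1}(z_k) − S_i(z_k)‖²)/(2‖z_k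 − S(z_k)‖²) if S(z_k) ≠ z_k and s_k := 1 otherwise. Then for every k ∈ ℕ, ‖z_k − P_M(x_0)‖ ≤ ‖S^{k+1}(x_0) − P_M(x_0)‖. -/
set_option linter.unusedSectionVars false

open RealInnerProductSpace

section Aux
variable {H : Type*} [NormedAddCommGroup H] [InnerProductSpace ℝ H]

/-- selfadjointness derived from the `A*A` form -/
lemma acsp_sa (T : H →L[ℝ] H) (A : H → H)
    (h1 : ∀ u v, ⟪T u, v⟫ = ⟪A u, A v⟫) :
    ∀ u v, ⟪T u, v⟫ = ⟪u, T v⟫ := by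
  intro u v
  calc ⟪T u, v⟫ = ⟪A u, A v⟫ := h1 u v
    _ = ⟪A v, A u⟫ := real_inner_comm _ _
    _ = ⟪T v, u⟫ := (h1 v u).symm
    _ = ⟪u, T v⟫ := real_inner_comm _ _

lemma acsp_L1 (T : H →L[ℝ] H) (A : H → H)
    (h1 : ∀ u v, ⟪T u, v⟫ = ⟪A u, A v⟫) (h2 : ∀ u, ‖A u‖ ≤ ‖u‖) (w : H) :
    ‖T w‖ ^ 2 ≤ ⟪T w, w⟫ := by
  have hA : ⟪T w, w⟫ = ‖A w‖ ^ 2 := by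
    rw [h1, real_inner_self_eq_norm_sq]
  have h3 : ⟪T w, T w⟫ = ⟪A w, A (T w)⟫ := h1 w (T w)
  have h4 : ⟪A w, A (T w)⟫ ≤ ‖A w‖ * ‖A (T w)‖ := real_inner_le_norm _ _
  have h5 : ‖A w‖ * ‖A (T w)‖ ≤ ‖A w‖ * ‖T w‖ :=
    mul_le_mul_of_nonneg_left (h2 _) (norm_nonneg _)
  have h6 : ‖T w‖ ^ 2 ≤ ‖A w‖ * ‖T w‖ := by
    rw [← real_inner_self_eq_norm_sq]; linarith
  rw [hA]
  nlinarith [norm_nonneg (T w), norm_nonneg (A w)]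

lemma acsp_TleI (T : H →L[ℝ] H) (A : H → H)
    (h1 : ∀ u v, ⟪T u, v⟫ = ⟪A u, A v⟫) (h2 : ∀ u, ‖A u‖ ≤ ‖u‖) (w : H) :
    ⟪T w, w⟫ ≤ ‖w‖ ^ 2 := by
  rw [h1, real_inner_self_eq_norm_sq]
  have := h2 w
  nlinarith [norm_nonneg (A w)]

end Aux

section Core
variable {H : Type*} [NormedAddCommGroup H] [InnerProductSpace ℝ H]

lemma acsp_core (T : H →L[ℝ] H) (A : H → H)
    (h1 : ∀ u v, ⟪T u, v⟫ = ⟪A u, A v⟫) (h2 : ∀ u, ‖A u‖ ≤ ‖u‖)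
    (z : H) (s : ℝ) (hs1 : 1 ≤ s)
    (hopt : ⟪z, z - T z⟫ = s * ‖z - T z‖ ^ 2) (j : ℕ) :
    ‖(T ^ j) (z + s • (T z - z))‖ ≤ ‖(T ^ (j + 1)) z‖ := by
  have hsa := acsp_sa T A h1
  have hs0 : (0:ℝ) < s + 1 := by linarith
  set t : ℝ := (s - 1) / (s + 1) with ht
  have htnn : 0 ≤ t := div_nonneg (by linarith) hs0.le
  have hts : t * (s + 1) = s - 1 := by rw [ht]; field_simp
  have hcomm : ∀ (jj : ℕ) (w : H), (T ^ jj) (T w) = T ((T ^ jj) w) := by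
    intro jj w
    rw [← ContinuousLinearMap.mul_apply, ← pow_succ, pow_succ', ContinuousLinearMap.mul_apply]
  have hG : ∀ jj : ℕ, 0 ≤ ⟪(T ^ jj) (T z - t • z), (T ^ jj) (z - T z)⟫ := by
    intro jj
    induction jj with
    | zero =>
      simp only [pow_zero, ContinuousLinearMap.one_apply]
      have hd2 : ⟪z - T z, z - T z⟫ = ‖z - T z‖ ^ 2 := real_inner_self_eq_norm_sq _
      have hTzd : ⟪T z, z - T z⟫ = s * ‖z - T z‖ ^ 2 - ‖z - T z‖ ^ 2 := by
        have h3 : ⟪z - (z - T z), z - T z⟫ = ⟪z, z - T z⟫ - ⟪z - T z, z - T z⟫ :=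
          inner_sub_left _ _ _
        simp only [sub_sub_cancel] at h3
        rw [h3, hopt, hd2]
      have hexp : ⟪T z - t • z, z - T z⟫ = (s - 1) * ‖z - T z‖ ^ 2 / (s + 1) := by
        rw [inner_sub_left, real_inner_smul_left, hTzd, hopt, ht]
        field_simp
        ring
      rw [hexp]
      apply div_nonneg (mul_nonneg (by linarith) (sq_nonneg _)) hs0.le
    | succ jj ih =>
      set y : H := (T ^ jj) z with hy
      set y1 : H := T y with hy1
      set y2 : H := T y1 with hy2
      have hu : (T ^ jj) (T z - t • z) = y1 - t • y := by
        rw [map_sub, map_smul, hcomm]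
      have hd : (T ^ jj) (z - T z) = y - y1 := by rw [map_sub, hcomm]
      have hu' : (T ^ (jj + 1)) (T z - t • z) = y2 - t • y1 := by
        rw [pow_succ', ContinuousLinearMap.mul_apply, hu, map_sub, map_smul]
      have hd' : (T ^ (jj + 1)) (z - T z) = y1 - y2 := by
        rw [pow_succ', ContinuousLinearMap.mul_apply, hd, map_sub]
      rw [hu, hd] at ih
      rw [hu', hd']
      -- scalar abbreviations
      have c1 : ⟪y2, y⟫ = ⟪y1, y1⟫ := hsa y1 y
      have c3 : ⟪y, y1⟫ = ⟪y1, y⟫ := real_inner_comm _ _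
      have c4 : ⟪y1, y2⟫ = ⟪y2, y1⟫ := real_inner_comm _ _
      have ihe : 0 ≤ (1 + t) * ⟪y1, y⟫ - ⟪y1, y1⟫ - t * ⟪y, y⟫ := by
        have e : ⟪y1 - t • y, y - y1⟫
            = (1 + t) * ⟪y1, y⟫ - ⟪y1, y1⟫ - t * ⟪y, y⟫ := by
          simp only [inner_sub_left, inner_sub_right, real_inner_smul_left, c3]
          ring
        rw [e] at ih
        exact ih
      have gA := acsp_L1 T A h1 h2 (y1 - t • y)
      have gB := acsp_TleI T A h1 h2 (y1 - t • y)
      have hTv : T (y1 - t • y) = y2 - t • y1 := by rw [map_sub, map_smul]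
      rw [hTv] at gA gB
      have eL : ‖y2 - t • y1‖ ^ 2
          = ⟪y2, y2⟫ - 2 * t * ⟪y2, y1⟫ + t ^ 2 * ⟪y1, y1⟫ := by
        rw [← real_inner_self_eq_norm_sq]
        simp only [inner_sub_left, inner_sub_right, real_inner_smul_left,
          real_inner_smul_right, c4]
        ring
      have eM : ⟪y2 - t • y1, y1 - t • y⟫
          = ⟪y2, y1⟫ - 2 * t * ⟪y1, y1⟫ + t ^ 2 * ⟪y1, y⟫ := by
        simp only [inner_sub_left, inner_sub_right, real_inner_smul_left,
          real_inner_smul_right, c1]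
        ring
      have eR : ‖y1 - t • y‖ ^ 2
          = ⟪y1, y1⟫ - 2 * t * ⟪y1, y⟫ + t ^ 2 * ⟪y, y⟫ := by
        rw [← real_inner_self_eq_norm_sq]
        simp only [inner_sub_left, inner_sub_right, real_inner_smul_left,
          real_inner_smul_right, c3]
        ring
      rw [eL, eM] at gA
      rw [eM, eR] at gB
      have egoal : ⟪y2 - t • y1, y1 - y2⟫
          = (1 + t) * ⟪y2, y1⟫ - ⟪y2, y2⟫ - t * ⟪y1, y1⟫ := by
        simp only [inner_sub_left, inner_sub_right, real_inner_smul_left, c4]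
        ring
      rw [egoal]
      nlinarith [mul_nonneg (mul_nonneg htnn htnn) ihe, mul_nonneg htnn (sub_nonneg.mpr gB), gA]
  -- main part
  set y : H := (T ^ j) z with hy
  set y1 : H := T y with hy1
  have hpow : (T ^ (j + 1)) z = y1 := by rw [pow_succ', ContinuousLinearMap.mul_apply]
  have hz'exp : (T ^ j) (z + s • (T z - z)) = y + s • (y1 - y) := by
    rw [map_add, map_smul, map_sub, hcomm]
  set b1 : ℝ := ⟪y, y - y1⟫ with hb1
  set b2 : ℝ := ⟪y1, y - y1⟫ with hb2
  have hGj : 0 ≤ b2 - t * b1 := by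
    have := hG j
    rw [map_sub, map_smul, hcomm, map_sub, hcomm] at this
    have e : ⟪y1 - t • y, y - y1⟫ = b2 - t * b1 := by
      rw [inner_sub_left, real_inner_smul_left, hb1, hb2]
    rwa [e] at this
  have hGj' : 0 ≤ (s + 1) * b2 - (s - 1) * b1 := by
    have h7 : (s + 1) * (b2 - t * b1) = (s + 1) * b2 - (s - 1) * b1 := by
      rw [← hts]; ring
    have h8 := mul_nonneg hs0.le hGj
    linarith [h8, h7.symm.le, h7.le]
  have hvid : y1 = (y + s • (y1 - y)) + (s - 1) • (y - y1) := by
    module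
  have hinner1 : ⟪y + s • (y1 - y), y - y1⟫ = b1 + s * (b2 - b1) := by
    rw [inner_add_left, real_inner_smul_left, inner_sub_left, hb1, hb2]
  have hnrm2 : ‖y - y1‖ ^ 2 = b1 - b2 := by
    rw [← real_inner_self_eq_norm_sq, inner_sub_left, hb1, hb2]
  have hns : ‖y1‖ ^ 2 = ‖y + s • (y1 - y)‖ ^ 2
      + 2 * ((s - 1) * (b1 + s * (b2 - b1))) + (s - 1) ^ 2 * (b1 - b2) := by
    calc ‖y1‖ ^ 2 = ‖(y + s • (y1 - y)) + (s - 1) • (y - y1)‖ ^ 2 := by rw [← hvid]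
      _ = ‖y + s • (y1 - y)‖ ^ 2 + 2 * ⟪y + s • (y1 - y), (s - 1) • (y - y1)⟫
          + ‖(s - 1) • (y - y1)‖ ^ 2 := norm_add_sq_real _ _
      _ = _ := by
          rw [real_inner_smul_right, hinner1, norm_smul, mul_pow, Real.norm_eq_abs,
            sq_abs, hnrm2]
  have hsq : ‖y + s • (y1 - y)‖ ^ 2 ≤ ‖y1‖ ^ 2 := by
    nlinarith [mul_nonneg (sub_nonneg.mpr hs1) hGj']
  rw [hz'exp, hpow]
  have := Real.sqrt_le_sqrt hsq
  rwa [Real.sqrt_sq (norm_nonneg _), Real.sqrt_sq (norm_nonneg _)] at this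

end Core

section Proj
variable {H : Type*} [NormedAddCommGroup H] [InnerProductSpace ℝ H] [CompleteSpace H]

lemma acsp_norm_le {x y : H} (h : ‖x‖ ^ 2 ≤ ‖y‖ ^ 2) : ‖x‖ ≤ ‖y‖ := by
  have := Real.sqrt_le_sqrt h
  rwa [Real.sqrt_sq (norm_nonneg _), Real.sqrt_sq (norm_nonneg _)] at this

lemma acsp_exists_Q (C : AffineSubspace ℝ H) (hCc : IsClosed (C : Set H))
    (P : H → H)
    (hP : ∀ x, P x ∈ (C : Set H) ∧ ∀ y ∈ (C : Set H), ‖x - P x‖ ≤ ‖x - y‖)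
    (m : H) (hm : m ∈ C) :
    ∃ Q : H →L[ℝ] H, (∀ v, P (m + v) = m + Q v) ∧ (∀ u v, ⟪Q u, v⟫ = ⟪u, Q v⟫) ∧
      (∀ u, Q (Q u) = Q u) ∧ (∀ u, ‖Q u‖ ≤ ‖u‖) := by
  set K : Submodule ℝ H := C.direction with hK
  haveI : CompleteSpace K := by
    have hKc : IsClosed (K : Set H) := by
      have h0 := AffineSubspace.coe_direction_eq_vsub_set_right hm
      rw [hK, h0]
      have : (· -ᵥ m) '' (C : Set H) = (Homeomorph.subRight m) '' (C : Set H) := by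
        apply Set.image_congr
        intro a _
        simp [vsub_eq_sub]
      rw [this, Homeomorph.isClosed_image]
      exact hCc
    exact hKc.completeSpace_coe
  refine ⟨K.subtypeL.comp (K.orthogonalProjectionOnto), ?_, ?_, ?_, ?_⟩
  · -- characterization
    intro v
    simp only [ContinuousLinearMap.comp_apply, Submodule.subtypeL_apply]
    set p : H := ↑(K.orthogonalProjectionOnto v) with hp
    have hpK : p ∈ K := SetLike.coe_mem _
    have key : ∀ w ∈ (C : Set H), ‖(m + v) - (m + p)‖ ≤ ‖(m + v) - w‖ := by
      intro w hw
      have hw' : w - m ∈ K := by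
        have := AffineSubspace.vsub_mem_direction hw hm
        rwa [vsub_eq_sub] at this
      have e1 : (m + v) - (m + p) = v - p := by abel
      have e2 : (m + v) - w = (v - p) + (p - (w - m)) := by abel
      have hzero : ⟪v - p, p - (w - m)⟫ = 0 :=
        K.starProjection_inner_eq_zero v _ (K.sub_mem hpK hw')
      have : ‖(m + v) - w‖ ^ 2 = ‖v - p‖ ^ 2 + ‖p - (w - m)‖ ^ 2 := by
        rw [e2, norm_add_sq_real, hzero]; ring
      rw [e1]
      apply acsp_norm_le
      rw [this]
      nlinarith [sq_nonneg ‖p - (w - m)‖]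
    have hbC : m + p ∈ C := by
      have := AffineSubspace.vadd_mem_of_mem_direction (by rw [← hK]; exact hpK) hm
      rwa [vadd_eq_add, add_comm] at this
    have ha := (hP (m + v)).1
    have hamin := (hP (m + v)).2
    set x : H := m + v with hx
    set a : H := P (m + v) with hadef
    set b : H := m + p with hbdef
    have h1 : ‖x - a‖ = ‖x - b‖ := le_antisymm (hamin b hbC) (key a ha)
    have hmidC : (2⁻¹ : ℝ) • (a + b) ∈ C := by
      have h2 := AffineSubspace.smul_vsub_vadd_mem C (2⁻¹ : ℝ) ha hbC hbC
      have h3 : (2⁻¹ : ℝ) • (a -ᵥ b) +ᵥ b = (2⁻¹ : ℝ) • (a + b) := by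
        rw [vsub_eq_sub, vadd_eq_add]; module
      rwa [h3] at h2
    have hminmid := hamin _ hmidC
    have h4 : x - (2⁻¹ : ℝ) • (a + b) = (2⁻¹ : ℝ) • ((x - a) + (x - b)) := by module
    have h5 : ‖x - a‖ ^ 2 ≤ (2⁻¹ : ℝ) ^ 2 * ‖(x - a) + (x - b)‖ ^ 2 := by
      have := hminmid
      rw [h4] at this
      have h6 : ‖(2⁻¹ : ℝ) • ((x - a) + (x - b))‖ = 2⁻¹ * ‖(x - a) + (x - b)‖ := by
        rw [norm_smul, Real.norm_eq_abs]; norm_num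
      rw [h6] at this
      nlinarith [norm_nonneg (x - a), norm_nonneg ((x - a) + (x - b))]
    have h7 : ‖(x - a) + (x - b)‖ ^ 2 = ‖x - a‖ ^ 2 + 2 * ⟪x - a, x - b⟫ + ‖x - b‖ ^ 2 :=
      norm_add_sq_real _ _
    have hip : ⟪x - a, x - b⟫ ≤ ‖x - a‖ * ‖x - b‖ := real_inner_le_norm _ _
    have h1sq : ‖x - b‖ ^ 2 = ‖x - a‖ ^ 2 := by rw [h1]
    have h8 : ‖x - a‖ ^ 2 ≤ ⟪x - a, x - b⟫ := by
      rw [h7, h1sq] at h5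
      nlinarith [h5]
    have h9 : ‖(x - a) - (x - b)‖ ^ 2 ≤ 0 := by
      rw [norm_sub_sq_real, h1sq]
      linarith [h8]
    have h10 : (x - a) - (x - b) = 0 := by
      have := norm_nonneg ((x - a) - (x - b))
      have h11 : ‖(x - a) - (x - b)‖ = 0 := by nlinarith
      exact norm_eq_zero.mp h11
    have : a = b := by
      have h12 : b - a = 0 := by rw [← h10]; abel
      have := sub_eq_zero.mp h12
      exact this.symm
    exact this
  · -- selfadjoint
    intro u v
    simp only [ContinuousLinearMap.comp_apply, Submodule.subtypeL_apply]
    exact K.inner_starProjection_left_eq_right u v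
  · -- idempotent
    intro u
    simp only [ContinuousLinearMap.comp_apply, Submodule.subtypeL_apply]
    congr 1
    exact Submodule.orthogonalProjectionOnto_mem_subspace_eq_self _
  · -- nonexpansive
    intro u
    simp only [ContinuousLinearMap.comp_apply, Submodule.subtypeL_apply]
    set p : H := ↑(K.orthogonalProjectionOnto u) with hp
    have hzero : ⟪u - p, p⟫ = 0 :=
      K.starProjection_inner_eq_zero u p (SetLike.coe_mem _)
    apply acsp_norm_le
    have e : u = p + (u - p) := by abel
    have : ‖u‖ ^ 2 = ‖p‖ ^ 2 + ‖u - p‖ ^ 2 := by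
      conv_lhs => rw [e]
      rw [norm_add_sq_real, real_inner_comm, hzero]
      ring
    nlinarith [sq_nonneg ‖u - p‖]

end Proj

lemma acsp_tele (g : ℕ → ℝ) (N : ℕ) :
    ∑ i ∈ Finset.Icc 1 N, (g (i - 1) - g i) = g 0 - g N := by
  induction N with
  | zero => simp
  | succ N ih =>
    rw [Finset.sum_Icc_succ_top (by omega), ih, Nat.add_sub_cancel]
    ring

noncomputable def acspB {H : Type*} [NormedAddCommGroup H] [InnerProductSpace ℝ H]
    (Q : ℕ → (H →L[ℝ] H)) (n : ℕ) : ℕ → (H →L[ℝ] H)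
  | 0 => 1
  | (k + 1) => (if k + 1 ≤ n then Q (k + 1) else Q (2 * n - (k + 1))).comp (acspB Q n k)


/-- Accelerated symmetric cyclic projections for affine subspaces: the accelerated
iterates `zₖ` satisfy `‖zₖ − P_M x₀‖ ≤ ‖S^{k+1} x₀ − P_M x₀‖`, where
`S = P_{M₁} ⋯ P_{M_{n−1}} P_{Mₙ} P_{M_{n−1}} ⋯ P_{M₁}` is the symmetric cyclic
projections operator (with partial compositions `Sᵢ`, `S₀ = I`, `S = S_{2n−1}`). -/
theorem accelerated_symmetric_cyclic_projections
    {H : Type*} [NormedAddCommGroup H] [InnerProductSpace ℝ H] [CompleteSpace H]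
    (n : ℕ) (hn : 1 ≤ n)
    (M : ℕ → AffineSubspace ℝ H)
    (hclosed : ∀ i ∈ Finset.Icc 1 n, IsClosed (M i : Set H))
    (hne : (⋂ i ∈ Finset.Icc 1 n, (M i : Set H)).Nonempty)
    (P : ℕ → H → H)
    (hP : ∀ i ∈ Finset.Icc 1 n, IsProjOn (M i : Set H) (P i))
    (PM : H → H)
    (hPM : IsProjOn (⋂ i ∈ Finset.Icc 1 n, (M i : Set H)) PM)
    (S : ℕ → H → H)
    (hS0 : S 0 = id)
    (hS1 : ∀ i, 1 ≤ i → i ≤ n → S i = P i ∘ S (i - 1))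
    (hS2 : ∀ i, n + 1 ≤ i → i ≤ 2 * n - 1 → S i = P (2 * n - i) ∘ S (i - 1))
    (x0 : H) (z : ℕ → H) (s : ℕ → ℝ)
    (hz0 : z 0 = S (2 * n - 1) x0)
    (hs : ∀ k, (S (2 * n - 1) (z k) ≠ z k →
        s k = 1 / 2 + (∑ i ∈ Finset.Icc 1 (2 * n - 1), ‖S (i - 1) (z k) - S i (z k)‖ ^ 2)
          / (2 * ‖z k - S (2 * n - 1) (z k)‖ ^ 2)) ∧
      (S (2 * n - 1) (z k) = z k → s k = 1))
    (hz : ∀ k, z (k + 1) = z k + s k • (S (2 * n - 1) (z k) - z k)) :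
    ∀ k : ℕ, ‖z k - PM x0‖ ≤ ‖(S (2 * n - 1))^[k + 1] x0 - PM x0‖ := by
  open RealInnerProductSpace in
  set m : H := PM x0 with hmdef
  set N : ℕ := 2 * n - 1 with hN
  have hmM : ∀ i ∈ Finset.Icc 1 n, m ∈ M i := by
    intro i hi
    have h0 := (hPM x0).1
    simp only [Set.mem_iInter] at h0
    exact h0 i hi
  have hQex : ∀ i : ℕ, ∃ Q : H →L[ℝ] H, i ∈ Finset.Icc 1 n →
      ((∀ v, P i (m + v) = m + Q v) ∧ (∀ u v, ⟪Q u, v⟫ = ⟪u, Q v⟫) ∧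
       (∀ u, Q (Q u) = Q u) ∧ (∀ u, ‖Q u‖ ≤ ‖u‖)) := by
    intro i
    by_cases h : i ∈ Finset.Icc 1 n
    · obtain ⟨Q, hQ⟩ := acsp_exists_Q (M i) (hclosed i h) (P i) (hP i h) m (hmM i h)
      exact ⟨Q, fun _ => hQ⟩
    · exact ⟨0, fun h' => absurd h' h⟩
  choose Q hQ using hQex
  -- bridging between S and the linear model
  have hbridge : ∀ i, i ≤ N → ∀ v : H, S i (m + v) = m + acspB Q n i v := by
    intro i
    induction i with
    | zero => intro _ v; rw [hS0]; simp [acspB]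
    | succ k ihk =>
      intro hk v
      have hk' : k ≤ N := by omega
      by_cases hcase : k + 1 ≤ n
      · have h1' := hS1 (k + 1) (by omega) hcase
        have hmem : k + 1 ∈ Finset.Icc 1 n := by simp only [Finset.mem_Icc]; omega
        have e : S (k + 1) (m + v) = P (k + 1) (S k (m + v)) := by
          rw [h1']; simp only [Function.comp_apply, Nat.add_sub_cancel]
        rw [e, ihk hk' v, (hQ _ hmem).1]
        simp [acspB, hcase]
      · have h2' := hS2 (k + 1) (by omega) (by omega)
        have hmem : 2 * n - (k + 1) ∈ Finset.Icc 1 n := by simp only [Finset.mem_Icc]; omega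
        have e : S (k + 1) (m + v) = P (2 * n - (k + 1)) (S k (m + v)) := by
          rw [h2']; simp only [Function.comp_apply, Nat.add_sub_cancel]
        rw [e, ihk hk' v, (hQ _ hmem).1]
        simp [acspB, hcase]
  set T : H →L[ℝ] H := acspB Q n N with hT
  set A : H →L[ℝ] H := acspB Q n n with hA
  -- step structure of acspB
  have hvalid : ∀ k, 1 ≤ k → k ≤ N → ∃ jj, jj ∈ Finset.Icc 1 n ∧
      ∀ v : H, acspB Q n k v = Q jj (acspB Q n (k - 1) v) := by
    intro k h1k hkN
    obtain ⟨k', rfl⟩ : ∃ k', k = k' + 1 := ⟨k - 1, by omega⟩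
    by_cases hcase : k' + 1 ≤ n
    · exact ⟨k' + 1, by simp only [Finset.mem_Icc]; omega,
        fun v => by simp [acspB, hcase, Nat.add_sub_cancel]⟩
    · exact ⟨2 * n - (k' + 1), by simp only [Finset.mem_Icc]; omega,
        fun v => by simp [acspB, hcase, Nat.add_sub_cancel]⟩
  -- T = A*A structure
  have hdown : ∀ j : ℕ, j ≤ n - 1 → ∀ u v : H,
      ⟪T u, v⟫ = ⟪acspB Q n (N - j) u, acspB Q n j v⟫ := by
    intro j
    induction j with
    | zero => intro _ u v; simp [acspB, hT]
    | succ jj ihj =>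
      intro hj u v
      have hjj : jj ≤ n - 1 := by omega
      rw [ihj hjj u v]
      have e1 : N - jj = (N - (jj + 1)) + 1 := by omega
      have hgt : ¬ (N - (jj + 1) + 1 ≤ n) := by omega
      have e2 : 2 * n - (N - (jj + 1) + 1) = jj + 1 := by omega
      have hmem : jj + 1 ∈ Finset.Icc 1 n := by simp only [Finset.mem_Icc]; omega
      have estep : ∀ w : H, acspB Q n (N - jj) w = Q (jj + 1) (acspB Q n (N - (jj + 1)) w) := by
        intro w; rw [e1]; simp [acspB, hgt, e2]
      have hup : jj + 1 ≤ n := by omega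
      have eup : acspB Q n (jj + 1) v = Q (jj + 1) (acspB Q n jj v) := by
        simp [acspB, hup]
      rw [estep u, (hQ _ hmem).2.1, eup]
  have h1 : ∀ u v : H, ⟪T u, v⟫ = ⟪A u, A v⟫ := by
    intro u v
    have hnm : N - (n - 1) = n := by omega
    have h0 := hdown (n - 1) le_rfl u v
    rw [hnm] at h0
    obtain ⟨jj, hjjmem, hjj⟩ := hvalid n (by omega) (by omega)
    have hsaj := (hQ _ hjjmem).2.1
    have hidem := (hQ _ hjjmem).2.2.1
    calc ⟪T u, v⟫ = ⟪acspB Q n n u, acspB Q n (n - 1) v⟫ := h0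
      _ = ⟪Q jj (acspB Q n (n - 1) u), acspB Q n (n - 1) v⟫ := by rw [← hjj u]
      _ = ⟪acspB Q n (n - 1) u, Q jj (acspB Q n (n - 1) v)⟫ := hsaj _ _
      _ = ⟪acspB Q n (n - 1) u, Q jj (Q jj (acspB Q n (n - 1) v))⟫ := by rw [hidem]
      _ = ⟪Q jj (acspB Q n (n - 1) u), Q jj (acspB Q n (n - 1) v)⟫ := (hsaj _ _).symm
      _ = ⟪A u, A v⟫ := by rw [← hjj u, ← hjj v]
  have h2 : ∀ k, k ≤ N → ∀ u : H, ‖acspB Q n k u‖ ≤ ‖u‖ := by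
    intro k
    induction k with
    | zero => intro _ u; simp [acspB]
    | succ kk ih =>
      intro hk u
      obtain ⟨jj, hjjmem, hjj⟩ := hvalid (kk + 1) (by omega) hk
      simp only [Nat.add_sub_cancel] at hjj
      rw [hjj u]
      calc ‖Q jj (acspB Q n kk u)‖ ≤ ‖acspB Q n kk u‖ := (hQ _ hjjmem).2.2.2 _
        _ ≤ ‖u‖ := ih (by omega) u
  have h2A : ∀ u : H, ‖A u‖ ≤ ‖u‖ := h2 n (by omega)
  -- Pythagoras along the composition
  have hpyth : ∀ k, 1 ≤ k → k ≤ N → ∀ v : H,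
      ‖acspB Q n (k - 1) v‖ ^ 2
        = ‖acspB Q n k v‖ ^ 2 + ‖acspB Q n (k - 1) v - acspB Q n k v‖ ^ 2 := by
    intro k h1k hkN v
    obtain ⟨jj, hjjmem, hjj⟩ := hvalid k h1k hkN
    set w : H := acspB Q n (k - 1) v with hw
    have hsaj := (hQ _ hjjmem).2.1
    have hidem := (hQ _ hjjmem).2.2.1
    rw [hjj v]
    have e2 : ⟪Q jj w, Q jj w⟫ = ⟪Q jj w, w⟫ := by
      calc ⟪Q jj w, Q jj w⟫ = ⟪w, Q jj (Q jj w)⟫ := hsaj _ _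
        _ = ⟪w, Q jj w⟫ := by rw [hidem]
        _ = ⟪Q jj w, w⟫ := real_inner_comm _ _
    have hz0' : ⟪Q jj w, w - Q jj w⟫ = 0 := by
      rw [inner_sub_right, e2]; ring
    have e3 : w = Q jj w + (w - Q jj w) := by abel
    calc ‖w‖ ^ 2 = ‖Q jj w + (w - Q jj w)‖ ^ 2 := by rw [← e3]
      _ = ‖Q jj w‖ ^ 2 + 2 * ⟪Q jj w, w - Q jj w⟫ + ‖w - Q jj w‖ ^ 2 := norm_add_sq_real _ _
      _ = ‖Q jj w‖ ^ 2 + ‖w - Q jj w‖ ^ 2 := by rw [hz0']; ring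
  -- translated coordinates
  set x : H := x0 - m with hxdef
  have hx0 : m + x = x0 := by rw [hxdef]; abel
  have hiter : ∀ k : ℕ, (S N)^[k + 1] x0 = m + (T ^ (k + 1)) x := by
    intro k
    induction k with
    | zero =>
      rw [Function.iterate_one, ← hx0, hbridge N le_rfl, pow_one]
    | succ kk ih =>
      rw [Function.iterate_succ_apply', ih, hbridge N le_rfl, ← hT]
      congr 1
      rw [show (T : H →L[ℝ] H) ^ (kk + 1 + 1) = T * T ^ (kk + 1) from pow_succ' T (kk + 1),
        ContinuousLinearMap.mul_apply]
  have hzk : ∀ k, S N (z k) = m + T (z k - m) := by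
    intro k
    have e : z k = m + (z k - m) := by abel
    conv_lhs => rw [e]
    rw [hbridge N le_rfl, ← hT]
  -- properties of the step sizes
  have hstep : ∀ k, 1 ≤ s k ∧
      ⟪z k - m, (z k - m) - T (z k - m)⟫ = s k * ‖(z k - m) - T (z k - m)‖ ^ 2 := by
    intro k
    set v : H := z k - m with hv
    have hd : z k - S N (z k) = v - T v := by rw [hzk k, hv]; abel
    by_cases hc : S N (z k) = z k
    · have hsk1 := (hs k).2 hc
      have hTv : T v = v := by
        have e : m + T v = m + v := by rw [← hzk k, hc, hv]; abel
        exact add_left_cancel e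
      refine ⟨by rw [hsk1], ?_⟩
      rw [hTv]
      simp
    · have hsf := (hs k).1 hc
      have hdne : v - T v ≠ 0 := by
        intro h0
        apply hc
        have hTv : T v = v := by
          have := sub_eq_zero.mp h0
          exact this.symm
        rw [hzk k, hTv, hv]
        abel
      have hdpos : 0 < ‖v - T v‖ ^ 2 := by
        have := norm_pos_iff.mpr hdne
        positivity
      have hsum : ∑ i ∈ Finset.Icc 1 N, ‖S (i - 1) (z k) - S i (z k)‖ ^ 2
          = ‖v‖ ^ 2 - ‖T v‖ ^ 2 := by
        have hzi : ∀ jj, jj ≤ N → S jj (z k) = m + acspB Q n jj v := by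
          intro jj hjj
          have e : z k = m + v := by rw [hv]; abel
          rw [e, hbridge jj hjj]
        have hterm : ∀ i ∈ Finset.Icc 1 N, ‖S (i - 1) (z k) - S i (z k)‖ ^ 2
            = ‖acspB Q n (i - 1) v‖ ^ 2 - ‖acspB Q n i v‖ ^ 2 := by
          intro i hi
          simp only [Finset.mem_Icc] at hi
          rw [hzi (i - 1) (by omega), hzi i (by omega)]
          have e : (m + acspB Q n (i - 1) v) - (m + acspB Q n i v)
              = acspB Q n (i - 1) v - acspB Q n i v := by abel
          rw [e]
          have := hpyth i hi.1 hi.2 v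
          linarith
        rw [Finset.sum_congr rfl hterm,
          acsp_tele (fun i => ‖acspB Q n i v‖ ^ 2) N]
        simp [acspB, hT]
      rw [hd, hsum] at hsf
      have hL1 := acsp_L1 T (⇑A) h1 h2A v
      have hns := norm_sub_sq_real v (T v)
      have hcm : ⟪v, T v⟫ = ⟪T v, v⟫ := real_inner_comm _ _
      have hE : ‖v - T v‖ ^ 2 ≤ ‖v‖ ^ 2 - ‖T v‖ ^ 2 := by nlinarith [hL1]
      constructor
      · rw [hsf]
        have h9 : (1 : ℝ) / 2 ≤ (‖v‖ ^ 2 - ‖T v‖ ^ 2) / (2 * ‖v - T v‖ ^ 2) := by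
          rw [le_div_iff₀ (by positivity)]
          linarith
        linarith
      · rw [hsf]
        have hinner : ⟪v, v - T v⟫ = ‖v‖ ^ 2 - ⟪v, T v⟫ := by
          rw [inner_sub_right, real_inner_self_eq_norm_sq]
        have e : (1 / 2 + (‖v‖ ^ 2 - ‖T v‖ ^ 2) / (2 * ‖v - T v‖ ^ 2)) * ‖v - T v‖ ^ 2
            = (‖v - T v‖ ^ 2 + (‖v‖ ^ 2 - ‖T v‖ ^ 2)) / 2 := by
          field_simp
        rw [e, hinner]
        linarith
  -- main induction
  have hmain : ∀ k, ∀ j, ‖(T ^ j) (z k - m)‖ ≤ ‖(T ^ (k + 1 + j)) x‖ := by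
    intro k
    induction k with
    | zero =>
      intro j
      have hv0 : z 0 - m = T x := by
        rw [hz0, ← hx0, hbridge N le_rfl, ← hT]
        abel
      rw [hv0, ← ContinuousLinearMap.mul_apply, ← pow_succ]
      rw [show 0 + 1 + j = j + 1 from by omega]
    | succ k ih =>
      intro j
      have hrec : z (k + 1) - m = (z k - m) + s k • (T (z k - m) - (z k - m)) := by
        have e : S N (z k) - z k = T (z k - m) - (z k - m) := by rw [hzk k]; abel
        rw [hz k, e]
        abel
      rw [hrec]
      calc ‖(T ^ j) ((z k - m) + s k • (T (z k - m) - (z k - m)))‖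
          ≤ ‖(T ^ (j + 1)) (z k - m)‖ :=
            acsp_core T (⇑A) h1 h2A _ (s k) (hstep k).1 (hstep k).2 j
        _ ≤ ‖(T ^ (k + 1 + (j + 1))) x‖ := ih (j + 1)
        _ = ‖(T ^ (k + 1 + 1 + j)) x‖ := by rw [show k + 1 + (j + 1) = k + 1 + 1 + j from by omega]
  intro k
  have h0 := hmain k 0
  rw [pow_zero, ContinuousLinearMap.one_apply, Nat.add_zero] at h0
  rw [hiter k]
  have e : m + (T ^ (k + 1)) x - m = (T ^ (k + 1)) x := by abel
  rw [e]
  exact h0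
end

section
/- Let C_1, C_2 be closed affine subspaces of a real Hilbert space H and let T := T_{C_1,C_2} := (1/2)(I + R_{C_2} R_{C_1}) be the Douglas–Rachford operator. Then for all x ∈ H and all y ∈ Fix T, ‖T(x) − y‖² + ‖x − T(x)‖² = ‖x − y‖². -/
open scoped RealInnerProductSpace

section Aux

variable {H : Type*} [NormedAddCommGroup H] [InnerProductSpace ℝ H]

lemma isProjOn_inner_le {S : Set H} (hS : Convex ℝ S) {P : H → H}
    (hP : IsProjOn S P) (x : H) : ∀ w ∈ S, ⟪x - P x, w - P x⟫ ≤ 0 := by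
  have : Nonempty S := ⟨⟨P x, (hP x).1⟩⟩
  have heq : ‖x - P x‖ = ⨅ w : S, ‖x - (w : H)‖ := by
    refine le_antisymm (le_ciInf fun w => (hP x).2 w w.2) ?_
    exact ciInf_le ⟨0, by rintro _ ⟨w, rfl⟩; positivity⟩ (⟨P x, (hP x).1⟩ : S)
  exact (norm_eq_iInf_iff_real_inner_le_zero hS (hP x).1).mp heq

lemma isProjOn_inner_eq {S : AffineSubspace ℝ H} {P : H → H}
    (hP : IsProjOn (S : Set H) P) (x : H) {u v : H} (hu : u ∈ S) (hv : v ∈ S) :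
    ⟪x - P x, u - v⟫ = 0 := by
  have hconv : Convex ℝ (S : Set H) := AffineSubspace.convex S
  have hPx : P x ∈ S := (hP x).1
  have h1 : ((u - v) + P x) ∈ S :=
    S.vadd_mem_of_mem_direction (S.vsub_mem_direction hu hv) hPx
  have h2 : ((v - u) + P x) ∈ S :=
    S.vadd_mem_of_mem_direction (S.vsub_mem_direction hv hu) hPx
  have l1 := isProjOn_inner_le hconv hP x _ h1
  have l2 := isProjOn_inner_le hconv hP x _ h2
  rw [show (u - v) + P x - P x = u - v by abel] at l1
  rw [show (v - u) + P x - P x = v - u by abel] at l2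
  rw [show v - u = -(u - v) by abel, inner_neg_right] at l2
  linarith

lemma reflect_norm_sq {S : AffineSubspace ℝ H} {P R : H → H}
    (hP : IsProjOn (S : Set H) P) (hR : ∀ x, R x = (2 : ℝ) • P x - x)
    (x x' : H) : ‖R x - R x'‖ ^ 2 = ‖x - x'‖ ^ 2 := by
  set a := P x - P x' with ha
  set b := (x - P x) - (x' - P x') with hb
  have hab : ⟪a, b⟫ = 0 := by
    have h1 : ⟪x - P x, a⟫ = 0 := isProjOn_inner_eq hP x (hP x).1 (hP x').1
    have h2 : ⟪x' - P x', a⟫ = 0 := isProjOn_inner_eq hP x' (hP x).1 (hP x').1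
    have h1' : ⟪a, x - P x⟫ = (0:ℝ) := by rw [real_inner_comm]; exact h1
    have h2' : ⟪a, x' - P x'⟫ = (0:ℝ) := by rw [real_inner_comm]; exact h2
    rw [hb, inner_sub_right, h1', h2', sub_zero]
  have hx : x - x' = a + b := by rw [ha, hb]; abel
  have hRx : R x - R x' = a - b := by rw [hR, hR, ha, hb]; module
  rw [hx, hRx, norm_sub_sq_real, norm_add_sq_real, hab]
  ring

end Aux

/-- The Douglas–Rachford operator `T = ½(I + R_{C₂} R_{C₁})` for closed affine
subspaces `C₁, C₂` satisfies `‖T x − y‖² + ‖x − T x‖² = ‖x − y‖²` for every `x ∈ H`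
and every fixed point `y` of `T`. -/
theorem douglas_rachford_affine_equality
    {H : Type*} [NormedAddCommGroup H] [InnerProductSpace ℝ H] [CompleteSpace H]
    (C1 C2 : AffineSubspace ℝ H)
    (hC1 : IsClosed (C1 : Set H)) (hC2 : IsClosed (C2 : Set H))
    (hC1ne : (C1 : Set H).Nonempty) (hC2ne : (C2 : Set H).Nonempty)
    (P1 P2 : H → H)
    (hP1 : IsProjOn (C1 : Set H) P1) (hP2 : IsProjOn (C2 : Set H) P2)
    (R1 R2 : H → H)
    (hR1 : ∀ x, R1 x = (2 : ℝ) • P1 x - x) (hR2 : ∀ x, R2 x = (2 : ℝ) • P2 x - x)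
    (T : H → H)
    (hT : ∀ x, T x = ((1 : ℝ) / 2) • (x + R2 (R1 x))) :
    ∀ x y : H, T y = y → ‖T x - y‖ ^ 2 + ‖x - T x‖ ^ 2 = ‖x - y‖ ^ 2 := by
  intro x y hy
  -- y is fixed by R2 ∘ R1
  have hfix : R2 (R1 y) = y := by
    have h := (hT y).symm.trans hy
    have h2 := congrArg (fun v => (2 : ℝ) • v) h
    simp only [smul_smul] at h2
    norm_num at h2
    have : y + R2 (R1 y) = y + y := by rw [h2, two_smul]
    exact add_left_cancel this
  set z := R2 (R1 x) with hz
  have hzy : ‖z - y‖ ^ 2 = ‖x - y‖ ^ 2 := by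
    have h := reflect_norm_sq hP2 hR2 (R1 x) (R1 y)
    have h' := reflect_norm_sq hP1 hR1 x y
    rw [hfix] at h
    rw [hz, h, h']
  have h1 : T x - y = ((1 : ℝ) / 2) • ((x - y) + (z - y)) := by
    rw [hT x, ← hz]; module
  have h2 : x - T x = ((1 : ℝ) / 2) • ((x - y) - (z - y)) := by
    rw [hT x, ← hz]; module
  have hpar := parallelogram_law_with_norm ℝ (x - y) (z - y)
  have e1 : ‖T x - y‖ = (1 / 2) * ‖(x - y) + (z - y)‖ := by
    rw [h1, norm_smul]; norm_num
  have e2 : ‖x - T x‖ = (1 / 2) * ‖(x - y) - (z - y)‖ := by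
    rw [h2, norm_smul]; norm_num
  have hzy' : ‖z - y‖ * ‖z - y‖ = ‖x - y‖ * ‖x - y‖ := by
    have := hzy; nlinarith [this]
  rw [e1, e2]
  nlinarith [hpar, hzy']
end

section
/- Let T_1, ..., T_n : H → H be firmly quasi-nonexpansive operators on a real Hilbert space H with m ∈ ∩_{i=1}^n Fix T_i. Let Q := T_n ⋯ T_1, Q_i := T_i ⋯ T_1 for i ∈ {1,...,n}, and Q_0 := I. Then for every x ∈ H, ⟨x − Q(x), m⟩ ≤ (1/2)‖x‖² − (1/2)‖Q(x)‖² − (1/2) Σ_{i=1}^n ‖Q_{i−1}(x) − Q_i(x)‖². -/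
open RealInnerProductSpace

/-- An operator `T : H → H` is firmly quasi-nonexpansive. -/
def FirmlyQuasiNonexpansive {H : Type*} [NormedAddCommGroup H] [InnerProductSpace ℝ H]
    (T : H → H) : Prop :=
  ∀ x y : H, T y = y → ‖T x - y‖ ^ 2 + ‖x - T x‖ ^ 2 ≤ ‖x - y‖ ^ 2

/-- For firmly quasi-nonexpansive operators `T₁, …, Tₙ` with common fixed point `m`,
`Q = Tₙ ⋯ T₁`, partial compositions `Qᵢ = Tᵢ ⋯ T₁` (`Q₀ = I`):
`⟨x − Q x, m⟩ ≤ ½‖x‖² − ½‖Q x‖² − ½ Σᵢ ‖Q_{i−1} x − Qᵢ x‖²`. -/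
theorem fqne_inner_bound
    {H : Type*} [NormedAddCommGroup H] [InnerProductSpace ℝ H]
    (n : ℕ) (hn : 1 ≤ n)
    (T : ℕ → H → H)
    (hT : ∀ i ∈ Finset.Icc 1 n, FirmlyQuasiNonexpansive (T i))
    (m : H) (hm : ∀ i ∈ Finset.Icc 1 n, T i m = m)
    (Q : ℕ → H → H)
    (hQ0 : Q 0 = id)
    (hQ : ∀ i, 1 ≤ i → i ≤ n → Q i = T i ∘ Q (i - 1))
    (x : H) :
    ⟪x - Q n x, m⟫
      ≤ (1 / 2) * ‖x‖ ^ 2 - (1 / 2) * ‖Q n x‖ ^ 2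
        - (1 / 2) * ∑ i ∈ Finset.Icc 1 n, ‖Q (i - 1) x - Q i x‖ ^ 2 := by
  have key : ∀ k, k ≤ n →
      ‖Q k x - m‖ ^ 2 + ∑ i ∈ Finset.Icc 1 k, ‖Q (i - 1) x - Q i x‖ ^ 2
        ≤ ‖x - m‖ ^ 2 := by
    intro k
    induction k with
    | zero => intro _; simp [hQ0]
    | succ k ih =>
      intro hkn
      have hk : k ≤ n := Nat.le_of_succ_le hkn
      have hmem : k + 1 ∈ Finset.Icc 1 n := Finset.mem_Icc.2 ⟨Nat.succ_le_succ (Nat.zero_le k), hkn⟩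
      have hQs : Q (k + 1) x = T (k + 1) (Q k x) := by
        rw [hQ (k + 1) (Nat.succ_le_succ (Nat.zero_le k)) hkn]; simp
      have hfq := hT (k + 1) hmem (Q k x) m (hm (k + 1) hmem)
      rw [Finset.sum_Icc_succ_top (Nat.succ_le_succ (Nat.zero_le k))]
      have hsum := ih hk
      simp only [Nat.add_sub_cancel, hQs] at *
      linarith
  have h := key n (le_refl n)
  have e1 : ‖x - m‖ ^ 2 = ‖x‖ ^ 2 - 2 * ⟪x, m⟫ + ‖m‖ ^ 2 := by
    rw [@norm_sub_sq_real]
  have e2 : ‖Q n x - m‖ ^ 2 = ‖Q n x‖ ^ 2 - 2 * ⟪Q n x, m⟫ + ‖m‖ ^ 2 := by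
    rw [@norm_sub_sq_real]
  rw [inner_sub_left]
  linarith
end

section
/- Let T_1, ..., T_n : H → H be firmly quasi-nonexpansive operators on a real Hilbert space H with m ∈ ∩_{i=1}^n Fix T_i. Let Q := T_n ⋯ T_1, Q_i := T_i ⋯ T_1 for i ∈ {1,...,n}, and Q_0 := I. Fix x_k ∈ H with Q(x_k) ≠ x_k. Then the unique minimiser t ∈ ℝ of ‖x_k + t(Q(x_k) − x_k) − m‖² satisfies t ≥ 1/2 + (Σ_{i=1}^n ‖Q_{i−1}(x_k) − Q_i(x_k)‖²)/(2‖x_k − Q(x_k)‖²). Moreover, if each T_i satisfies ‖T_i(x) − y‖² + ‖x − T_i(x)‖² = ‖x − y‖² for all x ∈ H and y ∈ Fix T_i, then this inequality holds with equality. -/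
open scoped RealInnerProductSpace


/-- Lower bound on the exact line-search step size for compositions of firmly
quasi-nonexpansive operators: the unique minimiser `t` of
`‖xₖ + t (Q xₖ − xₖ) − m‖²` satisfies
`t ≥ ½ + (Σᵢ ‖Q_{i−1} xₖ − Qᵢ xₖ‖²)/(2 ‖xₖ − Q xₖ‖²)`, with equality when each
`Tᵢ` satisfies the firm quasi-nonexpansiveness inequality with equality. -/
theorem fqne_step_size_lower_bound
    {H : Type*} [NormedAddCommGroup H] [InnerProductSpace ℝ H]
    (n : ℕ) (hn : 1 ≤ n)
    (T : ℕ → H → H)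
    (hT : ∀ i ∈ Finset.Icc 1 n, FirmlyQuasiNonexpansive (T i))
    (m : H) (hm : ∀ i ∈ Finset.Icc 1 n, T i m = m)
    (Q : ℕ → H → H)
    (hQ0 : Q 0 = id)
    (hQ : ∀ i, 1 ≤ i → i ≤ n → Q i = T i ∘ Q (i - 1))
    (xk : H) (hxk : Q n xk ≠ xk) :
    (∀ t : ℝ, (∀ s : ℝ, ‖xk + t • (Q n xk - xk) - m‖ ^ 2
          ≤ ‖xk + s • (Q n xk - xk) - m‖ ^ 2) →
        1 / 2 + (∑ i ∈ Finset.Icc 1 n, ‖Q (i - 1) xk - Q i xk‖ ^ 2)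
          / (2 * ‖xk - Q n xk‖ ^ 2) ≤ t) ∧
    ((∀ i ∈ Finset.Icc 1 n, ∀ x y : H, T i y = y →
        ‖T i x - y‖ ^ 2 + ‖x - T i x‖ ^ 2 = ‖x - y‖ ^ 2) →
      ∀ t : ℝ, (∀ s : ℝ, ‖xk + t • (Q n xk - xk) - m‖ ^ 2
          ≤ ‖xk + s • (Q n xk - xk) - m‖ ^ 2) →
        t = 1 / 2 + (∑ i ∈ Finset.Icc 1 n, ‖Q (i - 1) xk - Q i xk‖ ^ 2)
          / (2 * ‖xk - Q n xk‖ ^ 2)) := by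
  set d : H := Q n xk - xk with hd
  set c : ℝ := ‖d‖ ^ 2 with hcdef
  set b : ℝ := (inner ℝ (m - xk) d : ℝ) with hbdef
  set S : ℝ := ∑ i ∈ Finset.Icc 1 n, ‖Q (i - 1) xk - Q i xk‖ ^ 2 with hSdef
  have hc : 0 < c := by
    have hd0 : d ≠ 0 := sub_ne_zero_of_ne hxk
    exact pow_pos (norm_pos_iff.mpr hd0) 2
  have hnorm : ‖xk - Q n xk‖ ^ 2 = c := by rw [norm_sub_rev]
  have hb' : (inner ℝ (xk - m) d : ℝ) = -b := by
    rw [hbdef, inner_sub_left, inner_sub_left]; ring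
  have expand : ∀ s : ℝ, ‖xk + s • d - m‖ ^ 2 = ‖xk - m‖ ^ 2 - 2 * s * b + s ^ 2 * c := by
    intro s
    have h1 : xk + s • d - m = (xk - m) + s • d := by abel
    have h2 : ‖s • d‖ ^ 2 = s ^ 2 * c := by
      rw [norm_smul, mul_pow, Real.norm_eq_abs, sq_abs]
    rw [h1, @norm_add_sq_real, real_inner_smul_right, hb', h2]
    ring
  have hQn : xk + (1 : ℝ) • d = Q n xk := by rw [one_smul, hd]; abel
  -- telescoping inequality
  have key : ∀ k, k ≤ n →
      ‖Q k xk - m‖ ^ 2 + ∑ i ∈ Finset.Icc 1 k, ‖Q (i - 1) xk - Q i xk‖ ^ 2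
        ≤ ‖xk - m‖ ^ 2 := by
    intro k
    induction k with
    | zero => intro _; simp [hQ0]
    | succ k ih =>
      intro hk
      have hk' : k ≤ n := le_trans (Nat.le_succ k) hk
      have hmem : k + 1 ∈ Finset.Icc 1 n :=
        Finset.mem_Icc.mpr ⟨Nat.succ_le_succ (Nat.zero_le k), hk⟩
      have hQk : Q (k + 1) xk = T (k + 1) (Q k xk) := by
        rw [hQ (k + 1) (Nat.succ_le_succ (Nat.zero_le k)) hk]; simp
      have hfq := hT (k + 1) hmem (Q k xk) m (hm (k + 1) hmem)
      rw [Finset.sum_Icc_succ_top (Nat.succ_le_succ (Nat.zero_le k))]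
      simp only [Nat.add_sub_cancel]
      rw [hQk]
      have := ih hk'
      linarith
  have keyn := key n le_rfl
  have hmain : c + S ≤ 2 * b := by
    have h1 : ‖Q n xk - m‖ ^ 2 = ‖xk - m‖ ^ 2 - 2 * b + c := by
      rw [← hQn, expand]; ring
    rw [h1, ← hSdef] at keyn
    linarith
  -- uniqueness of the minimiser
  have huniq : ∀ t : ℝ, (∀ s : ℝ, ‖xk + t • d - m‖ ^ 2 ≤ ‖xk + s • d - m‖ ^ 2) →
      t = b / c := by
    intro t ht
    have h := ht (b / c)
    rw [expand, expand] at h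
    have hbc : (b / c) * c = b := div_mul_cancel₀ b (ne_of_gt hc)
    have htc : t * c = b := by nlinarith [sq_nonneg (t * c - b)]
    field_simp
    linarith [htc]
  constructor
  · intro t ht
    have := huniq t ht
    rw [this, hnorm]
    have e1 : (b / c) * c = b := div_mul_cancel₀ b (ne_of_gt hc)
    have e2 : (S / (2 * c)) * (2 * c) = S :=
      div_mul_cancel₀ S (by positivity)
    nlinarith [hc, hmain, e1, e2]
  · intro heq t ht
    have keyeq : ∀ k, k ≤ n →
        ‖Q k xk - m‖ ^ 2 + ∑ i ∈ Finset.Icc 1 k, ‖Q (i - 1) xk - Q i xk‖ ^ 2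
          = ‖xk - m‖ ^ 2 := by
      intro k
      induction k with
      | zero => intro _; simp [hQ0]
      | succ k ih =>
        intro hk
        have hk' : k ≤ n := le_trans (Nat.le_succ k) hk
        have hmem : k + 1 ∈ Finset.Icc 1 n :=
          Finset.mem_Icc.mpr ⟨Nat.succ_le_succ (Nat.zero_le k), hk⟩
        have hQk : Q (k + 1) xk = T (k + 1) (Q k xk) := by
          rw [hQ (k + 1) (Nat.succ_le_succ (Nat.zero_le k)) hk]; simp
        have hfq := heq (k + 1) hmem (Q k xk) m (hm (k + 1) hmem)
        rw [Finset.sum_Icc_succ_top (Nat.succ_le_succ (Nat.zero_le k))]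
        simp only [Nat.add_sub_cancel]
        rw [hQk]
        have := ih hk'
        linarith
    have keyn' := keyeq n le_rfl
    have hmain' : c + S = 2 * b := by
      have h1 : ‖Q n xk - m‖ ^ 2 = ‖xk - m‖ ^ 2 - 2 * b + c := by
        rw [← hQn, expand]; ring
      rw [h1, ← hSdef] at keyn'
      linarith
    have := huniq t ht
    rw [this, hnorm]
    have e1 : (b / c) * c = b := div_mul_cancel₀ b (ne_of_gt hc)
    have e2 : (S / (2 * c)) * (2 * c) = S :=
      div_mul_cancel₀ S (by positivity)
    have hb2 : b = (c + S) / 2 := by linarith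
    rw [hb2]
    field_simp [ne_of_gt hc]
end

section
/- Let M_1', M_2' be closed linear subspaces of a real Hilbert space H and let T' := T_{M_2',M_1'} T_{M_1',M_2'}, where T_{C_1,C_2} := (1/2)(I + R_{C_2} R_{C_1}). Then T' is self-adjoint and nonnegative, i.e., (T')* = T' and ⟨x, T'(x)⟩ ≥ 0 for all x ∈ H. -/
open RealInnerProductSpace

lemma proj_orth_aux {H : Type*} [NormedAddCommGroup H] [InnerProductSpace ℝ H]
    (M : Submodule ℝ H) (P : H →L[ℝ] H)
    (hP : ∀ x : H, P x ∈ M ∧ ∀ y ∈ M, ‖x - P x‖ ≤ ‖x - y‖) :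
    ∀ x : H, ∀ y ∈ M, ⟪x - P x, y⟫ = 0 := by
  intro x
  have hmem := (hP x).1
  have hnorm : ‖x - P x‖ = ⨅ w : M, ‖x - w‖ := by
    refine le_antisymm ?_ ?_
    · exact le_ciInf fun w => (hP x).2 w w.2
    · exact ciInf_le ⟨0, fun r ⟨w, hw⟩ => hw ▸ norm_nonneg _⟩ (⟨P x, hmem⟩ : M)
  exact (Submodule.norm_eq_iInf_iff_real_inner_eq_zero M hmem).1 hnorm

lemma proj_self_adjoint_aux {H : Type*} [NormedAddCommGroup H] [InnerProductSpace ℝ H]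
    (M : Submodule ℝ H) (P : H →L[ℝ] H)
    (hP : ∀ x : H, P x ∈ M ∧ ∀ y ∈ M, ‖x - P x‖ ≤ ‖x - y‖) :
    ∀ x y : H, ⟪P x, y⟫ = ⟪x, P y⟫ := by
  intro x y
  have h1 : ⟪x - P x, P y⟫ = 0 := proj_orth_aux M P hP x (P y) (hP y).1
  have h2 : ⟪y - P y, P x⟫ = 0 := proj_orth_aux M P hP y (P x) (hP x).1
  have e1 : ⟪x, P y⟫ = ⟪P x, P y⟫ := by
    have := inner_sub_left (𝕜 := ℝ) x (P x) (P y)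
    linarith [this ▸ h1]
  have e2 : ⟪y, P x⟫ = ⟪P y, P x⟫ := by
    have := inner_sub_left (𝕜 := ℝ) y (P y) (P x)
    linarith [this ▸ h2]
  calc ⟪P x, y⟫ = ⟪y, P x⟫ := real_inner_comm _ _
    _ = ⟪P y, P x⟫ := e2
    _ = ⟪P x, P y⟫ := real_inner_comm _ _
    _ = ⟪x, P y⟫ := e1.symm

/-- For closed linear subspaces `M₁', M₂'` of a real Hilbert space, the symmetrised
Douglas–Rachford operator `T' = T_{M₂',M₁'} T_{M₁',M₂'}` is self-adjoint and
nonnegative. -/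
theorem symmetric_dr_self_adjoint_nonneg
    {H : Type*} [NormedAddCommGroup H] [InnerProductSpace ℝ H] [CompleteSpace H]
    (M1' M2' : Submodule ℝ H)
    (hM1 : IsClosed (M1' : Set H)) (hM2 : IsClosed (M2' : Set H))
    (P1 P2 : H →L[ℝ] H)
    (hP1 : ∀ x : H, P1 x ∈ M1' ∧ ∀ y ∈ M1', ‖x - P1 x‖ ≤ ‖x - y‖)
    (hP2 : ∀ x : H, P2 x ∈ M2' ∧ ∀ y ∈ M2', ‖x - P2 x‖ ≤ ‖x - y‖)
    (R1 R2 : H →L[ℝ] H)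
    (hR1 : ∀ x, R1 x = (2 : ℝ) • P1 x - x) (hR2 : ∀ x, R2 x = (2 : ℝ) • P2 x - x)
    (T12 T21 : H →L[ℝ] H)
    (hT12 : ∀ x, T12 x = ((1 : ℝ) / 2) • (x + R2 (R1 x)))
    (hT21 : ∀ x, T21 x = ((1 : ℝ) / 2) • (x + R1 (R2 x))) :
    ContinuousLinearMap.adjoint (T21.comp T12) = T21.comp T12 ∧
      ∀ x : H, 0 ≤ ⟪x, (T21.comp T12) x⟫ := by
  have sp1 := proj_self_adjoint_aux M1' P1 hP1
  have sp2 := proj_self_adjoint_aux M2' P2 hP2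
  -- R1, R2 are self-adjoint
  have sr1 : ∀ x y : H, ⟪R1 x, y⟫ = ⟪x, R1 y⟫ := by
    intro x y
    rw [hR1 x, hR1 y, inner_sub_left, inner_sub_right, inner_smul_left, inner_smul_right,
      sp1 x y]
    simp
  have sr2 : ∀ x y : H, ⟪R2 x, y⟫ = ⟪x, R2 y⟫ := by
    intro x y
    rw [hR2 x, hR2 y, inner_sub_left, inner_sub_right, inner_smul_left, inner_smul_right,
      sp2 x y]
    simp
  -- T21 is the adjoint of T12
  have key : ∀ x y : H, ⟪T21 x, y⟫ = ⟪x, T12 y⟫ := by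
    intro x y
    rw [hT21 x, hT12 y, inner_smul_left, inner_smul_right, inner_add_left, inner_add_right]
    have h : ⟪R1 (R2 x), y⟫ = ⟪x, R2 (R1 y)⟫ := by rw [sr1, sr2, real_inner_comm]
    rw [h]
    simp
  have hadj12 : T21 = ContinuousLinearMap.adjoint T12 :=
    ContinuousLinearMap.eq_adjoint_iff T21 T12 |>.2 key
  have hadj21 : T12 = ContinuousLinearMap.adjoint T21 := by
    refine ContinuousLinearMap.eq_adjoint_iff T12 T21 |>.2 ?_
    intro x y
    calc ⟪T12 x, y⟫ = ⟪y, T12 x⟫ := real_inner_comm _ _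
      _ = ⟪T21 y, x⟫ := (key y x).symm
      _ = ⟪x, T21 y⟫ := real_inner_comm _ _
  constructor
  · rw [ContinuousLinearMap.adjoint_comp, ← hadj12, ← hadj21]
  · intro x
    have : ⟪x, (T21.comp T12) x⟫ = ⟪T12 x, T12 x⟫ := by
      simp only [ContinuousLinearMap.comp_apply]
      calc ⟪x, T21 (T12 x)⟫ = ⟪T21 (T12 x), x⟫ := real_inner_comm _ _
        _ = ⟪T12 x, T12 x⟫ := key _ _
    rw [this]
    exact real_inner_self_nonneg
end
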